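/- arXiv:2502.18475 — 4 statements merged into one kernel-verified Lean document; each statement's English description precedes it below -/
import Mathlib

section
/- Fix η ∈ ℝ^m and assume the local domination hypothesis at η. Then the function η' ↦ uKL(q_{η'} ∣ π) (restricted to the set where it is finite, which contains a neighbourhood of η) is differentiable at η, its gradient equals ∫ s(x)(η⬝s(x) − f(x)) e^{η⬝s(x)} dμ(x), and this gradient is zero if and only if (∫ s(x) s(x)ᵀ e^{η⬝s(x)} dμ(x)) η = ∫ f(x) s(x) e^{η⬝s(x)} dμ(x); equivalently, dividing by Z_η, if and only if F_η η = z_η. -/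
open MeasureTheory Matrix

noncomputable section

/-- The continuous linear functional `v ↦ g ⬝ᵥ v` on `ℝ^m`, used to express gradients. -/
def dotCLM {m : ℕ} (g : Fin m → ℝ) : (Fin m → ℝ) →L[ℝ] ℝ :=
  ∑ i, g i • ContinuousLinearMap.proj i

lemma dotCLM_apply {m : ℕ} (g v : Fin m → ℝ) : dotCLM g v = ∑ i, g i * v i := by
  simp [dotCLM]

lemma norm_dotCLM_le {m : ℕ} (g : Fin m → ℝ) : ‖dotCLM g‖ ≤ ∑ i, |g i| := by
  refine ContinuousLinearMap.opNorm_le_bound _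
    (Finset.sum_nonneg fun i _ => abs_nonneg _) fun v => ?_
  rw [dotCLM_apply]
  calc ‖∑ i, g i * v i‖ ≤ ∑ i, ‖g i * v i‖ := norm_sum_le _ _
    _ ≤ ∑ i, |g i| * ‖v‖ := Finset.sum_le_sum fun i _ => by
        rw [norm_mul]
        exact mul_le_mul_of_nonneg_left (norm_le_pi_norm v i) (norm_nonneg _)
    _ = (∑ i, |g i|) * ‖v‖ := (Finset.sum_mul _ _ _).symm

lemma hasFDerivAt_dotp {m : ℕ} (w η : Fin m → ℝ) :
    HasFDerivAt (fun η' : Fin m → ℝ => η' ⬝ᵥ w) (dotCLM w) η := by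
  have h : (fun η' : Fin m → ℝ => η' ⬝ᵥ w) = fun η' => dotCLM w η' := by
    funext η'
    rw [dotCLM_apply]
    simp [dotProduct, mul_comm]
  rw [h]
  exact (dotCLM w).hasFDerivAt

lemma hasFDerivAt_expdot {m : ℕ} (w η : Fin m → ℝ) :
    HasFDerivAt (fun η' : Fin m → ℝ => Real.exp (η' ⬝ᵥ w))
      (Real.exp (η ⬝ᵥ w) • dotCLM w) η :=
  (hasFDerivAt_dotp w η).exp

lemma hasFDerivAt_A {m : ℕ} (w : Fin m → ℝ) (c : ℝ) (η : Fin m → ℝ) :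
    HasFDerivAt (fun η' : Fin m → ℝ => Real.exp (η' ⬝ᵥ w) * (η' ⬝ᵥ w - c))
      (((η ⬝ᵥ w - c + 1) * Real.exp (η ⬝ᵥ w)) • dotCLM w) η := by
  have hd := hasFDerivAt_dotp w η
  have h : HasFDerivAt (fun η' : Fin m → ℝ => Real.exp (η' ⬝ᵥ w) * (η' ⬝ᵥ w - c)) _ η :=
    (hasFDerivAt_expdot w η).mul (hd.sub_const c)
  refine h.congr_fderiv ?_
  ext v
  simp only [ContinuousLinearMap.smul_apply, ContinuousLinearMap.add_apply, smul_eq_mul]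
  ring

lemma ae_uniform_bound {X : Type*} [MeasurableSpace X] (μ : Measure X) {m : ℕ}
    (s : X → Fin m → ℝ) (f g : X → ℝ) (η : Fin m → ℝ)
    (U : Set (Fin m → ℝ)) (hU : U ∈ nhds η)
    (hdom : ∀ η' ∈ U, ∀ᵐ x ∂μ,
      (1 + ∑ i, (s x i) ^ 2) * (1 + |η' ⬝ᵥ s x| + |f x|) * Real.exp (η' ⬝ᵥ s x) ≤ g x) :
    ∃ ε > 0, ∀ᵐ x ∂μ, ∀ η' ∈ Metric.ball η ε,
      (1 + ∑ i, (s x i) ^ 2) * (1 + |η' ⬝ᵥ s x| + |f x|) * Real.exp (η' ⬝ᵥ s x) ≤ g x := by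
  obtain ⟨ε, εpos, hball⟩ := Metric.mem_nhds_iff.1 hU
  refine ⟨ε, εpos, ?_⟩
  obtain ⟨D, hDc, hDd⟩ := TopologicalSpace.exists_countable_dense (Fin m → ℝ)
  set B := Metric.ball η ε with hB
  have hsub : D ∩ B ⊆ U := fun y hy => hball hy.2
  have hcnt : (D ∩ B).Countable := hDc.mono Set.inter_subset_left
  have hae : ∀ᵐ x ∂μ, ∀ y ∈ D ∩ B,
      (1 + ∑ i, (s x i) ^ 2) * (1 + |y ⬝ᵥ s x| + |f x|) * Real.exp (y ⬝ᵥ s x) ≤ g x :=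
    (ae_ball_iff hcnt).2 fun y hy => hdom y (hsub hy)
  filter_upwards [hae] with x hx η' hη'
  have hc : Continuous fun y : Fin m → ℝ => y ⬝ᵥ s x := by
    simp only [dotProduct]
    exact continuous_finset_sum _ fun i _ => (continuous_apply i).mul continuous_const
  have hcont : Continuous fun y : Fin m → ℝ =>
      (1 + ∑ i, (s x i) ^ 2) * (1 + |y ⬝ᵥ s x| + |f x|) * Real.exp (y ⬝ᵥ s x) :=
    (continuous_const.mul ((continuous_const.add hc.abs).add continuous_const)).mul
      (Real.continuous_exp.comp hc)
  have hclosed : IsClosed {y : Fin m → ℝ |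
      (1 + ∑ i, (s x i) ^ 2) * (1 + |y ⬝ᵥ s x| + |f x|) * Real.exp (y ⬝ᵥ s x) ≤ g x} :=
    isClosed_le hcont continuous_const
  have hmem : η' ∈ closure (D ∩ B) := by
    have := hDd.open_subset_closure_inter (Metric.isOpen_ball (x := η) (ε := ε)) hη'
    rwa [Set.inter_comm] at this
  exact hclosed.closure_subset_iff.2 (fun y hy => hx y hy) hmem


/-- Under the local domination hypothesis at `η`, the unnormalised
KL objective `η' ↦ uKL(q_{η'} ∣ π)` is differentiable at `η`, its gradient equals
`∫ s(x) (η⬝s(x) − f(x)) e^{η⬝s(x)} dμ(x)`, and this gradient vanishes iff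
`(∫ s sᵀ q_η dμ) η = ∫ f s q_η dμ`, equivalently (dividing by `Z_η`) iff `F_η η = z_η`. -/
theorem stmt0
    {X : Type*} [MeasurableSpace X] (μ : Measure X) [SigmaFinite μ]
    {m : ℕ} [NeZero m] (s : X → Fin m → ℝ) (hs : Measurable s)
    (hs1 : ∀ x, s x 0 = 1)
    (f : X → ℝ) (hf : Measurable f)
    (hπ0 : 0 < ∫ x, Real.exp (f x) ∂μ)
    (hπ1 : Integrable (fun x => Real.exp (f x)) μ)
    (η : Fin m → ℝ)
    -- local domination hypothesis at `η`
    (U : Set (Fin m → ℝ)) (hU : U ∈ nhds η)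
    (g : X → ℝ) (hg : Integrable g μ)
    (hdom : ∀ η' ∈ U, ∀ᵐ x ∂μ,
      (1 + ∑ i, (s x i) ^ 2) * (1 + |η' ⬝ᵥ s x| + |f x|) * Real.exp (η' ⬝ᵥ s x) ≤ g x) :
    -- differentiability of `uKL` at `η` with the stated gradient
    HasFDerivAt
      (fun η' : Fin m → ℝ =>
        (∫ x, Real.exp (η' ⬝ᵥ s x) * (η' ⬝ᵥ s x - f x) ∂μ)
          + (∫ x, Real.exp (f x) ∂μ) - ∫ x, Real.exp (η' ⬝ᵥ s x) ∂μ)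
      (dotCLM fun i => ∫ x, s x i * (η ⬝ᵥ s x - f x) * Real.exp (η ⬝ᵥ s x) ∂μ) η
    ∧
    -- the gradient is zero iff `(∫ s sᵀ q_η dμ) η = ∫ f s q_η dμ`
    (((fun i => ∫ x, s x i * (η ⬝ᵥ s x - f x) * Real.exp (η ⬝ᵥ s x) ∂μ) = (0 : Fin m → ℝ))
      ↔ (Matrix.of fun i j => ∫ x, s x i * s x j * Real.exp (η ⬝ᵥ s x) ∂μ) *ᵥ η
          = fun i => ∫ x, f x * s x i * Real.exp (η ⬝ᵥ s x) ∂μ)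
    ∧
    -- equivalently, dividing by `Z_η`, iff `F_η η = z_η`
    (((fun i => ∫ x, s x i * (η ⬝ᵥ s x - f x) * Real.exp (η ⬝ᵥ s x) ∂μ) = (0 : Fin m → ℝ))
      ↔ ((∫ x, Real.exp (η ⬝ᵥ s x) ∂μ)⁻¹ •
            (Matrix.of fun i j => ∫ x, s x i * s x j * Real.exp (η ⬝ᵥ s x) ∂μ)) *ᵥ η
          = (∫ x, Real.exp (η ⬝ᵥ s x) ∂μ)⁻¹ •
            fun i => ∫ x, f x * s x i * Real.exp (η ⬝ᵥ s x) ∂μ) := by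
  obtain ⟨ε, εpos, hub⟩ := ae_uniform_bound μ s f g η U hU hdom
  -- measurability
  have hsi : ∀ i, Measurable fun x => s x i := fun i => (measurable_pi_apply i).comp hs
  have hdotm : ∀ η' : Fin m → ℝ, Measurable fun x => η' ⬝ᵥ s x := fun η' => by
    simp only [dotProduct]
    exact Finset.measurable_sum _ fun i _ => measurable_const.mul (hsi i)
  have hexpm : ∀ η' : Fin m → ℝ, Measurable fun x => Real.exp (η' ⬝ᵥ s x) :=
    fun η' => Real.measurable_exp.comp (hdotm η')
  have hubη : ∀ᵐ x ∂μ,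
      (1 + ∑ i, (s x i) ^ 2) * (1 + |η ⬝ᵥ s x| + |f x|) * Real.exp (η ⬝ᵥ s x) ≤ g x :=
    hub.mono fun x hx => hx η (Metric.mem_ball_self εpos)
  -- pointwise bounds
  have hsq0 : ∀ x, (0:ℝ) ≤ ∑ i, (s x i) ^ 2 := fun x => Finset.sum_nonneg fun i _ => sq_nonneg _
  have hp1 : ∀ x, (1:ℝ) ≤ 1 + ∑ i, (s x i) ^ 2 := fun x => le_add_of_nonneg_right (hsq0 x)
  have habs_le : ∀ (x : X) (a b : ℝ) (η' : Fin m → ℝ), |a| ≤ 1 + ∑ i, (s x i) ^ 2 →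
      |b| ≤ 1 + |η' ⬝ᵥ s x| + |f x| →
      |a * b * Real.exp (η' ⬝ᵥ s x)| ≤
        (1 + ∑ i, (s x i) ^ 2) * (1 + |η' ⬝ᵥ s x| + |f x|) * Real.exp (η' ⬝ᵥ s x) := by
    intro x a b η' ha hb
    rw [abs_mul, abs_mul, Real.abs_exp]
    exact mul_le_mul_of_nonneg_right
      (mul_le_mul ha hb (abs_nonneg _) ((abs_nonneg a).trans ha)) (Real.exp_pos _).le
  have hsabs : ∀ x i, |s x i| ≤ 1 + ∑ j, (s x j) ^ 2 := by
    intro x i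
    have h2 : (s x i) ^ 2 ≤ ∑ j, (s x j) ^ 2 :=
      Finset.single_le_sum (f := fun j => (s x j) ^ 2) (fun j _ => sq_nonneg _) (Finset.mem_univ i)
    nlinarith [sq_nonneg (|s x i| - 1), sq_abs (s x i), abs_nonneg (s x i)]
  have hsij : ∀ x i j, |s x i * s x j| ≤ 1 + ∑ k, (s x k) ^ 2 := by
    intro x i j
    have hi : (s x i) ^ 2 ≤ ∑ k, (s x k) ^ 2 :=
      Finset.single_le_sum (f := fun k => (s x k) ^ 2) (fun k _ => sq_nonneg _) (Finset.mem_univ i)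
    have hj : (s x j) ^ 2 ≤ ∑ k, (s x k) ^ 2 :=
      Finset.single_le_sum (f := fun k => (s x k) ^ 2) (fun k _ => sq_nonneg _) (Finset.mem_univ j)
    rw [abs_mul]
    nlinarith [sq_abs (s x i), sq_abs (s x j), abs_nonneg (s x i), abs_nonneg (s x j),
      sq_nonneg (|s x i| - |s x j|)]
  have hbd : ∀ (x : X) (η' : Fin m → ℝ), |η' ⬝ᵥ s x - f x| ≤ 1 + |η' ⬝ᵥ s x| + |f x| :=
    fun x η' => (abs_sub _ _).trans (by linarith)
  have hbd1 : ∀ (x : X) (η' : Fin m → ℝ), |η' ⬝ᵥ s x - f x + 1| ≤ 1 + |η' ⬝ᵥ s x| + |f x| := by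
    intro x η'
    calc |η' ⬝ᵥ s x - f x + 1| ≤ |η' ⬝ᵥ s x - f x| + |1| := abs_add_le _ _
      _ ≤ (|η' ⬝ᵥ s x| + |f x|) + 1 := by
          have := abs_sub (η' ⬝ᵥ s x) (f x)
          simp only [abs_one]
          linarith
      _ = 1 + |η' ⬝ᵥ s x| + |f x| := by ring
  have hone : ∀ (x : X) (η' : Fin m → ℝ), |(1:ℝ)| ≤ 1 + |η' ⬝ᵥ s x| + |f x| := by
    intro x η'
    rw [abs_one]
    linarith [abs_nonneg (η' ⬝ᵥ s x), abs_nonneg (f x)]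
  -- integrability helper
  have hmk : ∀ (h : X → ℝ), Measurable h → (∀ᵐ x ∂μ, |h x| ≤ g x) → Integrable h μ :=
    fun h hm hb => hg.mono' hm.aestronglyMeasurable (by simpa [Real.norm_eq_abs] using hb)
  -- specific integrabilities
  have intExp : Integrable (fun x => Real.exp (η ⬝ᵥ s x)) μ := by
    refine hmk _ (hexpm η) (hubη.mono fun x hx => le_trans ?_ hx)
    have := habs_le x 1 1 η (by simpa using hp1 x) (hone x η)
    simpa using this
  have intA : Integrable (fun x => Real.exp (η ⬝ᵥ s x) * (η ⬝ᵥ s x - f x)) μ := by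
    refine hmk _ ((hexpm η).mul ((hdotm η).sub hf)) (hubη.mono fun x hx => le_trans ?_ hx)
    have := habs_le x 1 (η ⬝ᵥ s x - f x) η (by simpa using hp1 x) (hbd x η)
    calc |Real.exp (η ⬝ᵥ s x) * (η ⬝ᵥ s x - f x)|
        = |1 * (η ⬝ᵥ s x - f x) * Real.exp (η ⬝ᵥ s x)| := by rw [one_mul, abs_mul, abs_mul, mul_comm]
      _ ≤ _ := this
  have int_sA : ∀ i, Integrable
      (fun x => s x i * ((η ⬝ᵥ s x - f x + 1) * Real.exp (η ⬝ᵥ s x))) μ := by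
    intro i
    refine hmk _ ((hsi i).mul ((((hdotm η).sub hf).add_const 1).mul (hexpm η)))
      (hubη.mono fun x hx => le_trans ?_ hx)
    have := habs_le x (s x i) (η ⬝ᵥ s x - f x + 1) η (hsabs x i) (hbd1 x η)
    rw [← mul_assoc]
    exact this
  have int_sB : ∀ i, Integrable (fun x => s x i * Real.exp (η ⬝ᵥ s x)) μ := by
    intro i
    refine hmk _ ((hsi i).mul (hexpm η)) (hubη.mono fun x hx => le_trans ?_ hx)
    have := habs_le x (s x i) 1 η (hsabs x i) (hone x η)
    simpa using this
  have int_sd : ∀ i, Integrable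
      (fun x => s x i * (η ⬝ᵥ s x - f x) * Real.exp (η ⬝ᵥ s x)) μ := by
    intro i
    refine hmk _ (((hsi i).mul ((hdotm η).sub hf)).mul (hexpm η))
      (hubη.mono fun x hx => le_trans ?_ hx)
    exact habs_le x (s x i) (η ⬝ᵥ s x - f x) η (hsabs x i) (hbd x η)
  have intij : ∀ i j, Integrable
      (fun x => s x i * s x j * Real.exp (η ⬝ᵥ s x)) μ := by
    intro i j
    refine hmk _ (((hsi i).mul (hsi j)).mul (hexpm η)) (hubη.mono fun x hx => le_trans ?_ hx)
    simpa using habs_le x (s x i * s x j) 1 η (hsij x i j) (hone x η)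
  have intfi : ∀ i, Integrable
      (fun x => f x * s x i * Real.exp (η ⬝ᵥ s x)) μ := by
    intro i
    refine hmk _ ((hf.mul (hsi i)).mul (hexpm η)) (hubη.mono fun x hx => le_trans ?_ hx)
    have := habs_le x (s x i) (f x) η (hsabs x i)
      (by linarith [abs_nonneg (η ⬝ᵥ s x), le_refl (|f x|)])
    calc |f x * s x i * Real.exp (η ⬝ᵥ s x)|
        = |s x i * f x * Real.exp (η ⬝ᵥ s x)| := by rw [mul_comm (f x) (s x i)]
      _ ≤ _ := this
  -- CLM-valued measurability and norm bounds
  have hdclm : Continuous fun w : Fin m → ℝ => dotCLM w := by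
    unfold dotCLM
    exact continuous_finset_sum _ fun i _ => (continuous_apply i).smul continuous_const
  have hLcont : Continuous fun p : ℝ × (Fin m → ℝ) => p.1 • dotCLM p.2 :=
    continuous_fst.smul (hdclm.comp continuous_snd)
  have hAEm : ∀ (c : X → ℝ), Measurable c →
      AEStronglyMeasurable (fun x => c x • dotCLM (s x)) μ := fun c hc =>
    hLcont.comp_aestronglyMeasurable ((hc.prodMk hs).aestronglyMeasurable)
  have hnormF : ∀ (c : ℝ) (x : X), ‖c • dotCLM (s x)‖ ≤ |c| * ∑ i, |s x i| := fun c x => by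
    refine (norm_smul_le c (dotCLM (s x))).trans ?_
    rw [Real.norm_eq_abs]
    exact mul_le_mul_of_nonneg_left (norm_dotCLM_le (s x)) (abs_nonneg c)
  have hsumabs : ∀ x, ∑ i, |s x i| ≤ (m : ℝ) * (1 + ∑ i, (s x i) ^ 2) := by
    intro x
    have hm1 : (1:ℝ) ≤ (m:ℝ) := by exact_mod_cast Nat.one_le_iff_ne_zero.2 (NeZero.ne m)
    calc ∑ i, |s x i| ≤ ∑ i, (1 + (s x i) ^ 2) := Finset.sum_le_sum fun i _ => by
          nlinarith [sq_nonneg (|s x i| - 1), sq_abs (s x i), abs_nonneg (s x i)]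
      _ = (m:ℝ) + ∑ i, (s x i) ^ 2 := by rw [Finset.sum_add_distrib]; simp
      _ ≤ (m:ℝ) * (1 + ∑ i, (s x i) ^ 2) := by nlinarith [hsq0 x]
  have hboundA : ∀ᵐ x ∂μ, ∀ η' ∈ Metric.ball η ε,
      ‖((η' ⬝ᵥ s x - f x + 1) * Real.exp (η' ⬝ᵥ s x)) • dotCLM (s x)‖ ≤ (m:ℝ) * g x := by
    filter_upwards [hub] with x hx η' hη'
    have hφ := hx η' hη'
    have h1 : |(η' ⬝ᵥ s x - f x + 1) * Real.exp (η' ⬝ᵥ s x)| ≤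
        (1 + |η' ⬝ᵥ s x| + |f x|) * Real.exp (η' ⬝ᵥ s x) := by
      rw [abs_mul, Real.abs_exp]
      exact mul_le_mul_of_nonneg_right (hbd1 x η') (Real.exp_pos _).le
    calc ‖((η' ⬝ᵥ s x - f x + 1) * Real.exp (η' ⬝ᵥ s x)) • dotCLM (s x)‖
        ≤ |(η' ⬝ᵥ s x - f x + 1) * Real.exp (η' ⬝ᵥ s x)| * ∑ i, |s x i| := hnormF _ x
      _ ≤ ((1 + |η' ⬝ᵥ s x| + |f x|) * Real.exp (η' ⬝ᵥ s x)) * ((m:ℝ) * (1 + ∑ i, (s x i) ^ 2)) :=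
          mul_le_mul h1 (hsumabs x) (Finset.sum_nonneg fun i _ => abs_nonneg _) (by positivity)
      _ = (m:ℝ) * ((1 + ∑ i, (s x i) ^ 2) * (1 + |η' ⬝ᵥ s x| + |f x|) * Real.exp (η' ⬝ᵥ s x)) := by
          ring
      _ ≤ (m:ℝ) * g x := mul_le_mul_of_nonneg_left hφ (Nat.cast_nonneg m)
  have hboundB : ∀ᵐ x ∂μ, ∀ η' ∈ Metric.ball η ε,
      ‖Real.exp (η' ⬝ᵥ s x) • dotCLM (s x)‖ ≤ (m:ℝ) * g x := by
    filter_upwards [hub] with x hx η' hη'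
    have hφ := hx η' hη'
    have h1 : |Real.exp (η' ⬝ᵥ s x)| ≤ (1 + |η' ⬝ᵥ s x| + |f x|) * Real.exp (η' ⬝ᵥ s x) := by
      rw [Real.abs_exp]
      nlinarith [Real.exp_pos (η' ⬝ᵥ s x), abs_nonneg (η' ⬝ᵥ s x), abs_nonneg (f x)]
    calc ‖Real.exp (η' ⬝ᵥ s x) • dotCLM (s x)‖
        ≤ |Real.exp (η' ⬝ᵥ s x)| * ∑ i, |s x i| := hnormF _ x
      _ ≤ ((1 + |η' ⬝ᵥ s x| + |f x|) * Real.exp (η' ⬝ᵥ s x)) * ((m:ℝ) * (1 + ∑ i, (s x i) ^ 2)) :=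
          mul_le_mul h1 (hsumabs x) (Finset.sum_nonneg fun i _ => abs_nonneg _) (by positivity)
      _ = (m:ℝ) * ((1 + ∑ i, (s x i) ^ 2) * (1 + |η' ⬝ᵥ s x| + |f x|) * Real.exp (η' ⬝ᵥ s x)) := by
          ring
      _ ≤ (m:ℝ) * g x := mul_le_mul_of_nonneg_left hφ (Nat.cast_nonneg m)
  have hAder := hasFDerivAt_integral_of_dominated_of_fderiv_le
    (F := fun η' x => Real.exp (η' ⬝ᵥ s x) * (η' ⬝ᵥ s x - f x))
    (F' := fun η' x => ((η' ⬝ᵥ s x - f x + 1) * Real.exp (η' ⬝ᵥ s x)) • dotCLM (s x))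
    (Metric.ball_mem_nhds η εpos)
    (Filter.Eventually.of_forall fun η' =>
      ((hexpm η').mul ((hdotm η').sub hf)).aestronglyMeasurable)
    intA
    (hAEm _ ((((hdotm η).sub hf).add_const 1).mul (hexpm η)))
    hboundA
    (hg.const_mul (m:ℝ))
    (Filter.Eventually.of_forall fun x η' _ => hasFDerivAt_A (s x) (f x) η')
  have hBder := hasFDerivAt_integral_of_dominated_of_fderiv_le
    (F := fun η' x => Real.exp (η' ⬝ᵥ s x))
    (F' := fun η' x => Real.exp (η' ⬝ᵥ s x) • dotCLM (s x))
    (Metric.ball_mem_nhds η εpos)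
    (Filter.Eventually.of_forall fun η' => (hexpm η').aestronglyMeasurable)
    intExp
    (hAEm _ (hexpm η))
    hboundB
    (hg.const_mul (m:ℝ))
    (Filter.Eventually.of_forall fun x η' _ => hasFDerivAt_expdot (s x) η')
  have hintCLM_A : Integrable
      (fun x => ((η ⬝ᵥ s x - f x + 1) * Real.exp (η ⬝ᵥ s x)) • dotCLM (s x)) μ := by
    refine (hg.const_mul (m:ℝ)).mono'
      (hAEm _ ((((hdotm η).sub hf).add_const 1).mul (hexpm η))) ?_
    filter_upwards [hboundA] with x hx
    exact hx η (Metric.mem_ball_self εpos)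
  have hintCLM_B : Integrable (fun x => Real.exp (η ⬝ᵥ s x) • dotCLM (s x)) μ := by
    refine (hg.const_mul (m:ℝ)).mono' (hAEm _ (hexpm η)) ?_
    filter_upwards [hboundB] with x hx
    exact hx η (Metric.mem_ball_self εpos)
  have hrepr : ∀ (c : X → ℝ), Integrable (fun x => c x • dotCLM (s x)) μ →
      (∀ i, Integrable (fun x => s x i * c x) μ) →
      (∫ x, c x • dotCLM (s x) ∂μ) = dotCLM (fun i => ∫ x, s x i * c x ∂μ) := by
    intro c hint hci
    refine ContinuousLinearMap.ext fun v => ?_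
    rw [ContinuousLinearMap.integral_apply hint]
    simp only [ContinuousLinearMap.smul_apply, dotCLM_apply, smul_eq_mul]
    have hrw : (fun x => c x * ∑ i, s x i * v i) = fun x => ∑ i, (s x i * c x) * v i := by
      funext x
      rw [Finset.mul_sum]
      exact Finset.sum_congr rfl fun i _ => by ring
    rw [hrw, integral_finset_sum _ fun i _ => (hci i).mul_const (v i)]
    exact Finset.sum_congr rfl fun i _ => by rw [integral_mul_const]
  have hDA := hrepr _ hintCLM_A int_sA
  have hDB := hrepr _ hintCLM_B int_sB
  have hW : ∀ i, (∫ x, s x i * ((η ⬝ᵥ s x - f x + 1) * Real.exp (η ⬝ᵥ s x)) ∂μ)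
      - (∫ x, s x i * Real.exp (η ⬝ᵥ s x) ∂μ)
      = ∫ x, s x i * (η ⬝ᵥ s x - f x) * Real.exp (η ⬝ᵥ s x) ∂μ := by
    intro i
    rw [← integral_sub (int_sA i) (int_sB i)]
    congr 1
    funext x
    ring
  have hDsub : dotCLM (fun i => ∫ x, s x i * ((η ⬝ᵥ s x - f x + 1) * Real.exp (η ⬝ᵥ s x)) ∂μ)
      - dotCLM (fun i => ∫ x, s x i * Real.exp (η ⬝ᵥ s x) ∂μ)
      = dotCLM (fun i => ∫ x, s x i * (η ⬝ᵥ s x - f x) * Real.exp (η ⬝ᵥ s x) ∂μ) := by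
    refine ContinuousLinearMap.ext fun v => ?_
    simp only [ContinuousLinearMap.sub_apply, dotCLM_apply, ← Finset.sum_sub_distrib, ← sub_mul]
    exact Finset.sum_congr rfl fun i _ => by rw [hW i]
  have hderiv : HasFDerivAt
      (fun η' : Fin m → ℝ =>
        (∫ x, Real.exp (η' ⬝ᵥ s x) * (η' ⬝ᵥ s x - f x) ∂μ)
          + (∫ x, Real.exp (f x) ∂μ) - ∫ x, Real.exp (η' ⬝ᵥ s x) ∂μ)
      (dotCLM fun i => ∫ x, s x i * (η ⬝ᵥ s x - f x) * Real.exp (η ⬝ᵥ s x) ∂μ) η := by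
    have h := (hAder.add_const (∫ x, Real.exp (f x) ∂μ)).sub hBder
    rw [hDA, hDB, hDsub] at h
    exact h
  -- Part 2
  have hGrad : ∀ i, (∫ x, s x i * (η ⬝ᵥ s x - f x) * Real.exp (η ⬝ᵥ s x) ∂μ)
      = (((Matrix.of fun i j => ∫ x, s x i * s x j * Real.exp (η ⬝ᵥ s x) ∂μ) *ᵥ η) i)
        - ∫ x, f x * s x i * Real.exp (η ⬝ᵥ s x) ∂μ := by
    intro i
    have hsumint : Integrable (fun x => ∑ j, s x i * s x j * Real.exp (η ⬝ᵥ s x) * η j) μ :=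
      integrable_finset_sum _ fun j _ => (intij i j).mul_const (η j)
    have heq : (fun x => s x i * (η ⬝ᵥ s x - f x) * Real.exp (η ⬝ᵥ s x))
        = fun x => (∑ j, s x i * s x j * Real.exp (η ⬝ᵥ s x) * η j)
            - f x * s x i * Real.exp (η ⬝ᵥ s x) := by
      funext x
      have hsum : s x i * (η ⬝ᵥ s x) * Real.exp (η ⬝ᵥ s x)
          = ∑ j, s x i * s x j * Real.exp (η ⬝ᵥ s x) * η j := by
        simp only [dotProduct, Finset.mul_sum, Finset.sum_mul]
        exact Finset.sum_congr rfl fun j _ => by ring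
      calc s x i * (η ⬝ᵥ s x - f x) * Real.exp (η ⬝ᵥ s x)
          = s x i * (η ⬝ᵥ s x) * Real.exp (η ⬝ᵥ s x) - f x * s x i * Real.exp (η ⬝ᵥ s x) := by
            ring
        _ = _ := by rw [hsum]
    rw [heq, integral_sub hsumint (intfi i),
      integral_finset_sum _ fun j _ => (intij i j).mul_const (η j)]
    simp only [Matrix.mulVec, dotProduct, Matrix.of_apply]
    congr 1
    exact Finset.sum_congr rfl fun j _ => by rw [integral_mul_const]
  have part2 : ((fun i => ∫ x, s x i * (η ⬝ᵥ s x - f x) * Real.exp (η ⬝ᵥ s x) ∂μ)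
        = (0 : Fin m → ℝ))
      ↔ (Matrix.of fun i j => ∫ x, s x i * s x j * Real.exp (η ⬝ᵥ s x) ∂μ) *ᵥ η
        = fun i => ∫ x, f x * s x i * Real.exp (η ⬝ᵥ s x) ∂μ := by
    rw [funext_iff, funext_iff]
    refine forall_congr' fun i => ?_
    rw [hGrad i]
    simp only [Pi.zero_apply]
    exact sub_eq_zero
  -- Part 3
  have hZpos : 0 < ∫ x, Real.exp (η ⬝ᵥ s x) ∂μ := by
    rw [integral_pos_iff_support_of_nonneg (fun x => (Real.exp_pos _).le) intExp]
    have hsupp : Function.support (fun x => Real.exp (η ⬝ᵥ s x)) = Set.univ :=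
      Set.eq_univ_of_forall fun x => (Real.exp_pos _).ne'
    rw [hsupp]
    by_contra h
    push_neg at h
    have hμ : μ = 0 := Measure.measure_univ_eq_zero.1 (le_antisymm h (zero_le))
    rw [hμ] at hπ0
    simp at hπ0
  have hZinv : (∫ x, Real.exp (η ⬝ᵥ s x) ∂μ)⁻¹ ≠ 0 := inv_ne_zero hZpos.ne'
  have part3 : ((fun i => ∫ x, s x i * (η ⬝ᵥ s x - f x) * Real.exp (η ⬝ᵥ s x) ∂μ)
        = (0 : Fin m → ℝ))
      ↔ ((∫ x, Real.exp (η ⬝ᵥ s x) ∂μ)⁻¹ •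
            (Matrix.of fun i j => ∫ x, s x i * s x j * Real.exp (η ⬝ᵥ s x) ∂μ)) *ᵥ η
          = (∫ x, Real.exp (η ⬝ᵥ s x) ∂μ)⁻¹ •
            fun i => ∫ x, f x * s x i * Real.exp (η ⬝ᵥ s x) ∂μ := by
    rw [Matrix.smul_mulVec]
    exact part2.trans (smul_right_injective (Fin m → ℝ) hZinv).eq_iff.symm
  exact ⟨hderiv, part2, part3⟩
end
end

section
/- Write η = (η⁰, η̄) ∈ ℝ × ℝ^{m−1} and s = (1, s̄). Fix η and assume the local domination hypothesis at η. If the partial derivative of η ↦ uKL(q_η ∣ π) with respect to the first coordinate η⁰ vanishes at η, then η⁰ = Z_η⁻¹ ∫ (f(x) − η̄ ⬝ s̄(x)) e^{η⬝s(x)} dμ(x), i.e. η⁰ equals the expectation of f − η̄⬝s̄ under the probability density q_η / Z_η. -/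
open MeasureTheory Matrix

noncomputable section

/-- Write `η = (η⁰, η̄)` and `s = (1, s̄)`. Under the local domination
hypothesis at `η`, if the partial derivative of `η ↦ uKL(q_η ∣ π)` with respect to the
first coordinate `η⁰` vanishes at `η`, then
`η⁰ = Z_η⁻¹ ∫ (f(x) − η̄ ⬝ s̄(x)) e^{η⬝s(x)} dμ(x)`. -/
theorem stmt1
    {X : Type*} [MeasurableSpace X] (μ : Measure X) [SigmaFinite μ]
    {m : ℕ} [NeZero m] (s : X → Fin m → ℝ) (hs : Measurable s)
    (hs1 : ∀ x, s x 0 = 1)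
    (f : X → ℝ) (hf : Measurable f)
    (hπ0 : 0 < ∫ x, Real.exp (f x) ∂μ)
    (hπ1 : Integrable (fun x => Real.exp (f x)) μ)
    (η : Fin m → ℝ)
    -- local domination hypothesis at `η`
    (U : Set (Fin m → ℝ)) (hU : U ∈ nhds η)
    (g : X → ℝ) (hg : Integrable g μ)
    (hdom : ∀ η' ∈ U, ∀ᵐ x ∂μ,
      (1 + ∑ i, (s x i) ^ 2) * (1 + |η' ⬝ᵥ s x| + |f x|) * Real.exp (η' ⬝ᵥ s x) ≤ g x)
    -- the partial derivative of `uKL` with respect to the first coordinate vanishes at `η`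
    (hcrit : HasDerivAt
      (fun t : ℝ =>
        (∫ x, Real.exp (Function.update η 0 t ⬝ᵥ s x) * (Function.update η 0 t ⬝ᵥ s x - f x) ∂μ)
          + (∫ x, Real.exp (f x) ∂μ) - ∫ x, Real.exp (Function.update η 0 t ⬝ᵥ s x) ∂μ)
      0 (η 0)) :
    η 0 = (∫ x, Real.exp (η ⬝ᵥ s x) ∂μ)⁻¹ *
      ∫ x, (f x - ∑ i ∈ Finset.univ.erase 0, η i * s x i) * Real.exp (η ⬝ᵥ s x) ∂μ := by
  classical
  set r : X → ℝ := fun x => ∑ i ∈ Finset.univ.erase 0, η i * s x i with hr_def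
  -- key rewriting
  have hkey : ∀ (t : ℝ) (x : X), Function.update η 0 t ⬝ᵥ s x = t + r x := by
    intro t x
    simp only [dotProduct]
    rw [← Finset.add_sum_erase _ _ (Finset.mem_univ (0 : Fin m))]
    rw [Function.update_self, hs1, mul_one]
    congr 1
    exact Finset.sum_congr rfl fun i hi => by
      rw [Function.update_of_ne (Finset.ne_of_mem_erase hi)]
  have hηs : ∀ x, η ⬝ᵥ s x = η 0 + r x := by
    intro x
    have := hkey (η 0) x
    rwa [Function.update_eq_self] at this
  -- measurability
  have hsi : ∀ i, Measurable fun x => s x i := fun i => (measurable_pi_apply i).comp hs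
  have hr : Measurable r :=
    Finset.measurable_sum _ fun i _ => (hsi i).const_mul (η i)
  have hS : Measurable fun x => ∑ i, (s x i) ^ 2 :=
    Finset.measurable_sum _ fun i _ => (hsi i).pow_const 2
  have hSnn : ∀ x, 0 ≤ ∑ i, (s x i) ^ 2 := fun x =>
    Finset.sum_nonneg fun i _ => sq_nonneg _
  -- neighborhood
  have hηU : η ∈ U := mem_of_mem_nhds hU
  have hcont : Continuous (fun t : ℝ => Function.update η 0 t) :=
    (continuous_const : Continuous fun _ : ℝ => η).update 0 continuous_id
  have hV : (fun t : ℝ => Function.update η 0 t) ⁻¹' U ∈ nhds (η 0) := by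
    apply hcont.continuousAt.preimage_mem_nhds
    rwa [Function.update_eq_self]
  obtain ⟨ε, hε, hball⟩ := Metric.mem_nhds_iff.mp hV
  -- the a.e. uniform bound on the ball
  have hbound : ∀ᵐ x ∂μ, ∀ t ∈ Metric.ball (η 0) ε,
      (1 + ∑ i, (s x i) ^ 2) * (1 + |t + r x| + |f x|) * Real.exp (t + r x) ≤ g x := by
    have hQ : ∀ᵐ x ∂μ, ∀ q : ℚ, (q : ℝ) ∈ Metric.ball (η 0) ε →
        (1 + ∑ i, (s x i) ^ 2) * (1 + |(q : ℝ) + r x| + |f x|) * Real.exp ((q : ℝ) + r x) ≤ g x := by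
      rw [ae_all_iff]
      intro q
      by_cases hq : (q : ℝ) ∈ Metric.ball (η 0) ε
      · filter_upwards [hdom (Function.update η 0 (q : ℝ)) (hball hq)] with x hx _
        simpa [hkey] using hx
      · filter_upwards with x hx
        exact absurd hx hq
    filter_upwards [hQ] with x hx t ht
    have hclosed : IsClosed {t : ℝ |
        (1 + ∑ i, (s x i) ^ 2) * (1 + |t + r x| + |f x|) * Real.exp (t + r x) ≤ g x} := by
      apply isClosed_le _ continuous_const
      fun_prop
    have hsub : Metric.ball (η 0) ε ∩ Set.range ((↑) : ℚ → ℝ) ⊆ {t : ℝ |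
        (1 + ∑ i, (s x i) ^ 2) * (1 + |t + r x| + |f x|) * Real.exp (t + r x) ≤ g x} := by
      rintro t ⟨htb, q, rfl⟩
      exact hx q htb
    have hcl := Rat.denseRange_cast.open_subset_closure_inter Metric.isOpen_ball ht
    exact hclosed.closure_subset ((closure_mono hsub) hcl)
  -- abbreviations
  -- integrability facts at η
  have hgbd : ∀ᵐ x ∂μ,
      (1 + ∑ i, (s x i) ^ 2) * (1 + |η 0 + r x| + |f x|) * Real.exp (η 0 + r x) ≤ g x := by
    filter_upwards [hdom η hηU] with x hx
    simpa [hηs] using hx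
  have hg1 : ∀ᵐ x ∂μ, (1 + |η 0 + r x| + |f x|) * Real.exp (η 0 + r x) ≤ g x := by
    filter_upwards [hgbd] with x hx
    nlinarith [mul_nonneg (hSnn x) (mul_nonneg
      (by positivity : (0:ℝ) ≤ 1 + |η 0 + r x| + |f x|) (Real.exp_pos (η 0 + r x)).le)]
  have hmeas_e : ∀ t : ℝ, AEStronglyMeasurable (fun x => Real.exp (t + r x)) μ :=
    fun t => (Real.measurable_exp.comp (measurable_const.add hr)).aestronglyMeasurable
  have hint_e : Integrable (fun x => Real.exp (η 0 + r x)) μ := by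
    refine Integrable.mono hg (hmeas_e _) ?_
    filter_upwards [hg1] with x hx
    rw [Real.norm_eq_abs, abs_of_pos (Real.exp_pos _)]
    have h2 : 0 ≤ g x := le_trans (by positivity) hx
    rw [Real.norm_eq_abs, abs_of_nonneg h2]
    nlinarith [Real.exp_pos (η 0 + r x), abs_nonneg (η 0 + r x), abs_nonneg (f x)]
  have hint_F : Integrable (fun x => Real.exp (η 0 + r x) * (η 0 + r x - f x)) μ := by
    refine Integrable.mono hg ((hmeas_e _).mul
      (((measurable_const.add hr).sub hf).aestronglyMeasurable)) ?_
    filter_upwards [hg1] with x hx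
    have h2 : 0 ≤ g x := le_trans (by positivity) hx
    rw [Real.norm_eq_abs, Real.norm_eq_abs, abs_of_nonneg h2, abs_mul,
      abs_of_pos (Real.exp_pos _)]
    have h3 : |η 0 + r x - f x| ≤ |η 0 + r x| + |f x| := abs_sub _ _
    nlinarith [Real.exp_pos (η 0 + r x)]
  have hint_F' : Integrable (fun x => Real.exp (η 0 + r x) * (η 0 + r x - f x + 1)) μ := by
    refine Integrable.mono hg ((hmeas_e _).mul
      ((((measurable_const.add hr).sub hf).add_const 1).aestronglyMeasurable)) ?_
    filter_upwards [hg1] with x hx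
    have h2 : 0 ≤ g x := le_trans (by positivity) hx
    rw [Real.norm_eq_abs, Real.norm_eq_abs, abs_of_nonneg h2, abs_mul,
      abs_of_pos (Real.exp_pos _)]
    have h3 : |η 0 + r x - f x + 1| ≤ |η 0 + r x| + |f x| + 1 := by
      calc |η 0 + r x - f x + 1| ≤ |η 0 + r x - f x| + 1 := by
            simpa using abs_add_le (η 0 + r x - f x) 1
        _ ≤ |η 0 + r x| + |f x| + 1 := by
            have := abs_sub (η 0 + r x) (f x); linarith
    nlinarith [Real.exp_pos (η 0 + r x)]
  -- first derivative: t ↦ ∫ exp(t+r)(t+r-f)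
  have hD1 := hasDerivAt_integral_of_dominated_loc_of_deriv_le (μ := μ)
    (F := fun t x => Real.exp (t + r x) * (t + r x - f x))
    (F' := fun t x => Real.exp (t + r x) * (t + r x - f x + 1))
    (x₀ := η 0) (bound := g) (Metric.ball_mem_nhds _ hε)
    (Filter.Eventually.of_forall fun t =>
      ((hmeas_e t).mul (((measurable_const.add hr).sub hf).aestronglyMeasurable)))
    hint_F
    ((hmeas_e _).mul ((((measurable_const.add hr).sub hf).add_const 1).aestronglyMeasurable))
    (by
      filter_upwards [hbound] with x hx t ht
      have hx' := hx t ht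
      rw [Real.norm_eq_abs, abs_mul, abs_of_pos (Real.exp_pos _)]
      have h3 : |t + r x - f x + 1| ≤ 1 + |t + r x| + |f x| := by
        calc |t + r x - f x + 1| ≤ |t + r x - f x| + 1 := by
              simpa using abs_add_le (t + r x - f x) 1
          _ ≤ 1 + |t + r x| + |f x| := by
              have := abs_sub (t + r x) (f x); linarith
      calc Real.exp (t + r x) * |t + r x - f x + 1|
          ≤ Real.exp (t + r x) * (1 + |t + r x| + |f x|) :=
            mul_le_mul_of_nonneg_left h3 (Real.exp_pos _).le
        _ ≤ (1 + ∑ i, (s x i) ^ 2) * (1 + |t + r x| + |f x|) * Real.exp (t + r x) := by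
            nlinarith [mul_nonneg (hSnn x) (mul_nonneg
              (by positivity : (0:ℝ) ≤ 1 + |t + r x| + |f x|) (Real.exp_pos (t + r x)).le)]
        _ ≤ g x := hx')
    hg
    (by
      filter_upwards with x t ht
      have ha : HasDerivAt (fun t : ℝ => t + r x) 1 t := (hasDerivAt_id t).add_const _
      have hb : HasDerivAt (fun t : ℝ => Real.exp (t + r x)) (Real.exp (t + r x) * 1) t :=
        (Real.hasDerivAt_exp _).comp t ha
      have hc : HasDerivAt (fun t : ℝ => t + r x - f x) 1 t := ha.sub_const _
      have := hb.mul hc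
      exact this.congr_deriv (by ring))
  -- second derivative: t ↦ ∫ exp(t+r)
  have hD2 := hasDerivAt_integral_of_dominated_loc_of_deriv_le (μ := μ)
    (F := fun t x => Real.exp (t + r x))
    (F' := fun t x => Real.exp (t + r x))
    (x₀ := η 0) (bound := g) (Metric.ball_mem_nhds _ hε)
    (Filter.Eventually.of_forall fun t => hmeas_e t)
    hint_e (hmeas_e _)
    (by
      filter_upwards [hbound] with x hx t ht
      have hx' := hx t ht
      rw [Real.norm_eq_abs, abs_of_pos (Real.exp_pos _)]
      nlinarith [Real.exp_pos (t + r x), hSnn x,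
        mul_nonneg (hSnn x) (Real.exp_pos (t + r x)).le,
        mul_nonneg (abs_nonneg (t + r x)) (Real.exp_pos (t + r x)).le,
        mul_nonneg (abs_nonneg (f x)) (Real.exp_pos (t + r x)).le,
        mul_nonneg (mul_nonneg (hSnn x) (abs_nonneg (t + r x))) (Real.exp_pos (t + r x)).le,
        mul_nonneg (mul_nonneg (hSnn x) (abs_nonneg (f x))) (Real.exp_pos (t + r x)).le])
    hg
    (by
      filter_upwards with x t ht
      have ha : HasDerivAt (fun t : ℝ => t + r x) 1 t := (hasDerivAt_id t).add_const _
      have hb := (Real.hasDerivAt_exp (t + r x)).comp t ha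
      exact hb.congr_deriv (by ring))
  -- combine
  have hD : HasDerivAt
      (fun t : ℝ =>
        (∫ x, Real.exp (t + r x) * (t + r x - f x) ∂μ)
          + (∫ x, Real.exp (f x) ∂μ) - ∫ x, Real.exp (t + r x) ∂μ)
      ((∫ x, Real.exp (η 0 + r x) * (η 0 + r x - f x + 1) ∂μ)
        - ∫ x, Real.exp (η 0 + r x) ∂μ) (η 0) :=
    (hD1.2.add_const _).sub hD2.2
  have hcrit' : HasDerivAt
      (fun t : ℝ =>
        (∫ x, Real.exp (t + r x) * (t + r x - f x) ∂μ)
          + (∫ x, Real.exp (f x) ∂μ) - ∫ x, Real.exp (t + r x) ∂μ)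
      0 (η 0) := by
    simpa only [hkey] using hcrit
  have heq0 : (∫ x, Real.exp (η 0 + r x) * (η 0 + r x - f x + 1) ∂μ)
      - ∫ x, Real.exp (η 0 + r x) ∂μ = 0 := (hcrit'.unique hD).symm
  -- algebra
  have hsplit : (∫ x, Real.exp (η 0 + r x) * (η 0 + r x - f x + 1) ∂μ)
      = (∫ x, Real.exp (η 0 + r x) * (η 0 + r x - f x) ∂μ) + ∫ x, Real.exp (η 0 + r x) ∂μ := by
    rw [← integral_add hint_F hint_e]
    congr 1; funext x; ring
  have hmain : (∫ x, Real.exp (η 0 + r x) * (η 0 + r x - f x) ∂μ) = 0 := by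
    rw [hsplit] at heq0; linarith
  -- rewrite the goal
  have hint_fr : Integrable (fun x => (f x - r x) * Real.exp (η 0 + r x)) μ := by
    refine Integrable.mono (hg.const_mul (1 + |η 0|))
      (((hf.sub hr).mul (Real.measurable_exp.comp (measurable_const.add hr))).aestronglyMeasurable)
      ?_
    filter_upwards [hg1] with x hx
    have h2 : 0 ≤ g x := le_trans (by positivity) hx
    rw [Real.norm_eq_abs, Real.norm_eq_abs, abs_mul, abs_of_pos (Real.exp_pos _),
      abs_of_nonneg (by positivity : (0:ℝ) ≤ (1 + |η 0|) * g x)]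
    have h3 : |f x - r x| ≤ |f x| + |η 0 + r x| + |η 0| := by
      have h4 : |f x - r x| ≤ |f x - (η 0 + r x)| + |η 0| := by
        have : f x - r x = (f x - (η 0 + r x)) + η 0 := by ring
        rw [this]; exact abs_add_le _ _
      have h5 : |f x - (η 0 + r x)| ≤ |f x| + |η 0 + r x| := abs_sub _ _
      linarith
    calc |f x - r x| * Real.exp (η 0 + r x)
        ≤ (|f x| + |η 0 + r x| + |η 0|) * Real.exp (η 0 + r x) :=
          mul_le_mul_of_nonneg_right h3 (Real.exp_pos _).le
      _ ≤ (1 + |η 0|) * ((1 + |η 0 + r x| + |f x|) * Real.exp (η 0 + r x)) := by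
          nlinarith [Real.exp_pos (η 0 + r x),
            mul_nonneg (mul_nonneg (abs_nonneg (η 0)) (abs_nonneg (η 0 + r x)))
              (Real.exp_pos (η 0 + r x)).le,
            mul_nonneg (mul_nonneg (abs_nonneg (η 0)) (abs_nonneg (f x)))
              (Real.exp_pos (η 0 + r x)).le]
      _ ≤ (1 + |η 0|) * g x :=
          mul_le_mul_of_nonneg_left hx (by positivity)
  have hZpos : 0 < ∫ x, Real.exp (η 0 + r x) ∂μ := by
    have hμ : μ ≠ 0 := by
      intro h
      rw [h] at hπ0
      simp at hπ0
    rw [integral_pos_iff_support_of_nonneg (fun x => (Real.exp_pos _).le) hint_e]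
    have : Function.support (fun x => Real.exp (η 0 + r x)) = Set.univ := by
      ext x; simp [Function.support, (Real.exp_pos _).ne']
    rw [this]
    exact Measure.measure_univ_pos.mpr hμ
  have hsplit2 : (∫ x, Real.exp (η 0 + r x) * (η 0 + r x - f x) ∂μ)
      = η 0 * (∫ x, Real.exp (η 0 + r x) ∂μ) - ∫ x, (f x - r x) * Real.exp (η 0 + r x) ∂μ := by
    rw [← integral_const_mul, ← integral_sub (hint_e.const_mul _) hint_fr]
    congr 1; funext x; ring
  rw [hsplit2] at hmain
  simp only [hηs]
  rw [eq_inv_mul_iff_mul_eq₀ hZpos.ne']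
  linarith
end
end

section
/- Write η = (η⁰, η̄) ∈ ℝ × ℝ^{m−1} and s = (1, s̄), and define the normalised Kullback–Leibler objective K(η̄) = ∫ q̄_{η̄} log(q̄_{η̄}/π̄) dμ, where q̄_{η̄} = e^{η̄⬝s̄} / ∫ e^{η̄⬝s̄} dμ and π̄ = e^f / ∫ e^f dμ. Fix η and assume the local domination hypothesis at η. Then: (i) if the gradient of η ↦ uKL(q_η ∣ π) vanishes at η, then the gradient of η̄' ↦ K(η̄') vanishes at η̄; and (ii) conversely, if the gradient of K vanishes at η̄ and the partial derivative of uKL(q_η ∣ π) with respect to η⁰ vanishes at η, then the full gradient of η ↦ uKL(q_η ∣ π) vanishes at η. -/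
open MeasureTheory Matrix Real Filter Metric

noncomputable section

namespace Stmt2Aux

variable {m : ℕ}

def dotCLM (a : Fin m → ℝ) : (Fin m → ℝ) →L[ℝ] ℝ :=
  ∑ i, a i • (ContinuousLinearMap.proj i : (Fin m → ℝ) →L[ℝ] ℝ)

@[simp] lemma dotCLM_apply (a u : Fin m → ℝ) : dotCLM a u = u ⬝ᵥ a := by
  simp [dotCLM, dotProduct, mul_comm]

lemma hasFDerivAt_dot (a : Fin m → ℝ) (v : Fin m → ℝ) :
    HasFDerivAt (fun u : Fin m → ℝ => u ⬝ᵥ a) (dotCLM a) v := by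
  have h : (fun u : Fin m → ℝ => u ⬝ᵥ a) = fun u => dotCLM a u := by
    funext u; rw [dotCLM_apply]
  rw [h]
  exact (dotCLM a).hasFDerivAt

lemma norm_dotCLM_le (a : Fin m → ℝ) : ‖dotCLM a‖ ≤ ∑ i, |a i| := by
  refine ContinuousLinearMap.opNorm_le_bound _ (by positivity) fun u => ?_
  rw [dotCLM_apply]
  calc ‖u ⬝ᵥ a‖ ≤ ∑ i, |u i * a i| := Finset.abs_sum_le_sum_abs _ _
    _ ≤ ∑ i, ‖u‖ * |a i| := by
        refine Finset.sum_le_sum fun i _ => ?_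
        rw [abs_mul]
        exact mul_le_mul_of_nonneg_right (norm_le_pi_norm u i) (abs_nonneg _)
    _ = (∑ i, |a i|) * ‖u‖ := by rw [← Finset.mul_sum, mul_comm]

lemma sum_abs_le_card_add_sum_sq (a : Fin m → ℝ) : ∑ i, |a i| ≤ m + ∑ i, (a i) ^ 2 := by
  calc ∑ i, |a i| ≤ ∑ i, (1 + (a i) ^ 2) := by
        refine Finset.sum_le_sum fun i _ => ?_
        nlinarith [sq_nonneg (|a i| - 1), sq_abs (a i)]
    _ = m + ∑ i, (a i) ^ 2 := by
        rw [Finset.sum_add_distrib]; simp [Finset.card_univ]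

lemma cons_dot (t : ℝ) (η' : Fin (m + 1) → ℝ) (w : Fin m → ℝ) :
    η' ⬝ᵥ (Fin.cons t w : Fin (m + 1) → ℝ) = η' 0 * t + Fin.tail η' ⬝ᵥ w := by
  simp [dotProduct, Fin.sum_univ_succ, Fin.tail]

lemma stronglyMeasurable_dotCLM {X : Type*} [MeasurableSpace X]
    {sbar : X → Fin m → ℝ} (hsbar : Measurable sbar) :
    StronglyMeasurable fun x => dotCLM (sbar x) := by
  unfold dotCLM
  refine Finset.stronglyMeasurable_fun_sum _ fun i _ => ?_
  exact ((measurable_pi_apply i).comp hsbar).stronglyMeasurable.smul_const _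


lemma cons_mem_ball {m : ℕ} {t : ℝ} {v w : Fin m → ℝ} {ε : ℝ}
    (h : v ∈ Metric.ball w ε) :
    (Fin.cons t v : Fin (m + 1) → ℝ) ∈ Metric.ball (Fin.cons t w : Fin (m + 1) → ℝ) ε := by
  rw [Metric.mem_ball] at h ⊢
  have hle : dist (Fin.cons t v : Fin (m + 1) → ℝ) (Fin.cons t w) ≤ dist v w := by
    rw [dist_pi_le_iff dist_nonneg]
    intro i
    refine Fin.cases ?_ ?_ i
    · simpa using dist_nonneg
    · intro j
      simpa [Fin.cons_succ] using dist_le_pi_dist v w j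
  linarith

variable {m : ℕ} {X : Type*} [MeasurableSpace X] {μ : Measure X}

lemma measurable_dot {sbar : X → Fin m → ℝ} (hsbar : Measurable sbar) (v : Fin m → ℝ) :
    Measurable fun x => v ⬝ᵥ sbar x := by
  simp only [dotProduct]
  exact Finset.measurable_sum _ fun i _ =>
    (measurable_const.mul ((measurable_pi_apply i).comp hsbar))

lemma main_deriv (sbar : X → Fin m → ℝ) (hsbar : Measurable sbar)
    (f : X → ℝ) (hf : Measurable f)
    (η0 : ℝ) (ηbar : Fin m → ℝ) (g : X → ℝ) (hg : Integrable g μ)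
    (ε : ℝ) (εpos : 0 < ε)
    (hdom : ∀ᵐ x ∂μ, ∀ η' ∈ Metric.ball (Fin.cons η0 ηbar : Fin (m + 1) → ℝ) ε,
      (1 + ∑ i, ((Fin.cons 1 (sbar x) : Fin (m + 1) → ℝ) i) ^ 2)
          * (1 + |η' ⬝ᵥ (Fin.cons 1 (sbar x) : Fin (m + 1) → ℝ)| + |f x|)
          * Real.exp (η' ⬝ᵥ (Fin.cons 1 (sbar x) : Fin (m + 1) → ℝ)) ≤ g x) :
    ∃ Z' W' : (Fin m → ℝ) →L[ℝ] ℝ,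
      HasFDerivAt (fun v : Fin m → ℝ => ∫ x, Real.exp (v ⬝ᵥ sbar x) ∂μ) Z' ηbar ∧
      HasFDerivAt (fun v : Fin m → ℝ =>
        ∫ x, Real.exp (v ⬝ᵥ sbar x) * (v ⬝ᵥ sbar x - f x) ∂μ) W' ηbar := by
  classical
  have hm0 : (0:ℝ) ≤ (m : ℝ) := Nat.cast_nonneg m
  -- basic a.e. bound, reformulated
  have hkey : ∀ᵐ x ∂μ, ∀ v ∈ Metric.ball ηbar ε,
      (2 + ∑ i, (sbar x i) ^ 2) * (1 + |η0 + v ⬝ᵥ sbar x| + |f x|)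
        * Real.exp (v ⬝ᵥ sbar x) ≤ Real.exp (-η0) * g x := by
    refine hdom.mono fun x hx v hv => ?_
    have hmem := hx (Fin.cons η0 v) (cons_mem_ball hv)
    have hdot : (Fin.cons η0 v : Fin (m + 1) → ℝ) ⬝ᵥ (Fin.cons 1 (sbar x) : Fin (m + 1) → ℝ)
        = η0 + v ⬝ᵥ sbar x := by
      rw [cons_dot]; simp
    have hsum : (∑ i, ((Fin.cons 1 (sbar x) : Fin (m + 1) → ℝ) i) ^ 2)
        = 1 + ∑ i, (sbar x i) ^ 2 := by
      rw [Fin.sum_univ_succ]; simp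
    rw [hdot, hsum] at hmem
    rw [Real.exp_neg, ← div_eq_inv_mul, le_div_iff₀ (Real.exp_pos η0)]
    calc (2 + ∑ i, sbar x i ^ 2) * (1 + |η0 + v ⬝ᵥ sbar x| + |f x|)
          * Real.exp (v ⬝ᵥ sbar x) * Real.exp η0
        = (1 + (1 + ∑ i, sbar x i ^ 2)) * (1 + |η0 + v ⬝ᵥ sbar x| + |f x|)
          * Real.exp (η0 + v ⬝ᵥ sbar x) := by
          rw [Real.exp_add]; ring
      _ ≤ g x := hmem
  -- notation
  set S : X → ℝ := fun x => ∑ i, (sbar x i) ^ 2 with hS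
  have hS0 : ∀ x, 0 ≤ S x := fun x => Finset.sum_nonneg fun i _ => sq_nonneg _
  have hsumabs : ∀ x, ∑ i, |sbar x i| ≤ m + S x := fun x => sum_abs_le_card_add_sum_sq _
  have hmdot := measurable_dot hsbar
  have hmeasexp : ∀ v : Fin m → ℝ, Measurable fun x => Real.exp (v ⬝ᵥ sbar x) :=
    fun v => Real.measurable_exp.comp (hmdot v)
  have hAnn : ∀ (b c : ℝ), (1:ℝ) ≤ 1 + |b| + |c| := by
    intro b c; have := abs_nonneg b; have := abs_nonneg c; linarith
  -- pointwise consequences at center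
  have hcenter : ∀ᵐ x ∂μ, (2 + S x) * (1 + |η0 + ηbar ⬝ᵥ sbar x| + |f x|)
      * Real.exp (ηbar ⬝ᵥ sbar x) ≤ Real.exp (-η0) * g x :=
    hkey.mono fun x hx => hx ηbar (Metric.mem_ball_self εpos)
  -- Z part
  have hZ : HasFDerivAt (fun v : Fin m → ℝ => ∫ x, Real.exp (v ⬝ᵥ sbar x) ∂μ)
      (∫ x, Real.exp (ηbar ⬝ᵥ sbar x) • dotCLM (sbar x) ∂μ) ηbar := by
    apply hasFDerivAt_integral_of_dominated_of_fderiv_le (hs := Metric.ball_mem_nhds _ εpos)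
      (F := fun (v : Fin m → ℝ) x => Real.exp (v ⬝ᵥ sbar x))
      (F' := fun (v : Fin m → ℝ) x => Real.exp (v ⬝ᵥ sbar x) • dotCLM (sbar x))
      (bound := fun x => (m + 1) * (Real.exp (-η0) * g x))
    · exact Filter.Eventually.of_forall fun v => (hmeasexp v).aestronglyMeasurable
    · -- integrability at center
      refine Integrable.mono' (hg.const_mul (Real.exp (-η0)))
        ((hmeasexp ηbar).aestronglyMeasurable) ?_
      refine hcenter.mono fun x hx => ?_
      have hE := Real.exp_pos (ηbar ⬝ᵥ sbar x)
      rw [Real.norm_eq_abs, abs_of_pos hE]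
      have hA := hAnn (η0 + ηbar ⬝ᵥ sbar x) (f x)
      have hkey1 : (1:ℝ) * Real.exp (ηbar ⬝ᵥ sbar x)
          ≤ (2 + S x) * (1 + |η0 + ηbar ⬝ᵥ sbar x| + |f x|) * Real.exp (ηbar ⬝ᵥ sbar x) :=
        mul_le_mul_of_nonneg_right (by nlinarith [hS0 x]) hE.le
      linarith [hx, hkey1]
    · exact (((hmeasexp ηbar).stronglyMeasurable).smul
        (stronglyMeasurable_dotCLM hsbar)).aestronglyMeasurable
    · -- bound
      refine hkey.mono fun x hx v hv => ?_
      have hE := Real.exp_pos (v ⬝ᵥ sbar x)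
      have hA := hAnn (η0 + v ⬝ᵥ sbar x) (f x)
      have hx' := hx v hv
      have h1 : ‖Real.exp (v ⬝ᵥ sbar x) • dotCLM (sbar x)‖
          ≤ Real.exp (v ⬝ᵥ sbar x) * (m + S x) := by
        have h0 := norm_smul_le (Real.exp (v ⬝ᵥ sbar x)) (dotCLM (sbar x))
        rw [Real.norm_eq_abs, abs_of_pos hE] at h0
        exact h0.trans
          (mul_le_mul_of_nonneg_left ((norm_dotCLM_le _).trans (hsumabs x)) hE.le)
      refine h1.trans ?_
      have key2 : (↑m + S x : ℝ)
          ≤ (↑m + 1) * ((2 + S x) * (1 + |η0 + v ⬝ᵥ sbar x| + |f x|)) := by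
        nlinarith [hS0 x, mul_nonneg hm0 (hS0 x),
          mul_nonneg (mul_nonneg (by linarith : (0:ℝ) ≤ (↑m : ℝ) + 1)
            (by linarith [hS0 x] : (0:ℝ) ≤ 2 + S x))
            (by linarith [abs_nonneg (η0 + v ⬝ᵥ sbar x), abs_nonneg (f x)] :
              (0:ℝ) ≤ |η0 + v ⬝ᵥ sbar x| + |f x|)]
      calc Real.exp (v ⬝ᵥ sbar x) * (↑m + S x)
          ≤ Real.exp (v ⬝ᵥ sbar x)
            * ((↑m + 1) * ((2 + S x) * (1 + |η0 + v ⬝ᵥ sbar x| + |f x|))) :=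
            mul_le_mul_of_nonneg_left key2 hE.le
        _ = (↑m + 1) * ((2 + S x) * (1 + |η0 + v ⬝ᵥ sbar x| + |f x|)
            * Real.exp (v ⬝ᵥ sbar x)) := by ring
        _ ≤ (↑m + 1) * (Real.exp (-η0) * g x) :=
            mul_le_mul_of_nonneg_left hx' (by linarith)
    · exact (hg.const_mul _).const_mul _
    · refine Filter.Eventually.of_forall fun x v _ => ?_
      exact (hasFDerivAt_dot (sbar x) v).exp
  -- W part
  have hWptdiff : ∀ (x : X) (v : Fin m → ℝ),
      HasFDerivAt (fun v : Fin m → ℝ => Real.exp (v ⬝ᵥ sbar x) * (v ⬝ᵥ sbar x - f x))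
        ((Real.exp (v ⬝ᵥ sbar x) * (v ⬝ᵥ sbar x - f x + 1)) • dotCLM (sbar x)) v := by
    intro x v
    have hd := hasFDerivAt_dot (sbar x) v
    have : HasFDerivAt (fun v : Fin m → ℝ => Real.exp (v ⬝ᵥ sbar x) * (v ⬝ᵥ sbar x - f x)) _ v :=
      hd.exp.mul (hd.sub_const (f x))
    refine this.congr_fderiv ?_
    ext u
    simp only [ContinuousLinearMap.add_apply, ContinuousLinearMap.coe_smul',
      Pi.smul_apply, smul_eq_mul, ContinuousLinearMap.smul_apply]
    ring
  have habs' : ∀ (v : Fin m → ℝ) (x : X),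
      |v ⬝ᵥ sbar x - f x| ≤ |η0 + v ⬝ᵥ sbar x| + |η0| + |f x| := by
    intro v x
    have he : v ⬝ᵥ sbar x - f x = (η0 + v ⬝ᵥ sbar x) + (-η0) + (-(f x)) := by ring
    rw [he]
    calc |(η0 + v ⬝ᵥ sbar x) + (-η0) + (-(f x))|
        ≤ |(η0 + v ⬝ᵥ sbar x) + (-η0)| + |(-(f x))| := abs_add_le _ _
      _ ≤ |η0 + v ⬝ᵥ sbar x| + |(-η0)| + |(-(f x))| := by
          have := abs_add_le (η0 + v ⬝ᵥ sbar x) (-η0); linarith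
      _ = |η0 + v ⬝ᵥ sbar x| + |η0| + |f x| := by rw [abs_neg, abs_neg]
  have hWsm : StronglyMeasurable fun x =>
      (Real.exp (ηbar ⬝ᵥ sbar x) * (ηbar ⬝ᵥ sbar x - f x + 1)) • dotCLM (sbar x) := by
    refine StronglyMeasurable.smul (f := fun x => Real.exp (ηbar ⬝ᵥ sbar x) * (ηbar ⬝ᵥ sbar x - f x + 1)) ?_ (stronglyMeasurable_dotCLM hsbar)
    exact ((hmeasexp ηbar).mul (((hmdot ηbar).sub hf).add measurable_const)).stronglyMeasurable
  have hW : HasFDerivAt (fun v : Fin m → ℝ =>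
      ∫ x, Real.exp (v ⬝ᵥ sbar x) * (v ⬝ᵥ sbar x - f x) ∂μ)
      (∫ x, (Real.exp (ηbar ⬝ᵥ sbar x) * (ηbar ⬝ᵥ sbar x - f x + 1)) • dotCLM (sbar x) ∂μ)
      ηbar := by
    apply hasFDerivAt_integral_of_dominated_of_fderiv_le (hs := Metric.ball_mem_nhds _ εpos)
      (F := fun (v : Fin m → ℝ) x => Real.exp (v ⬝ᵥ sbar x) * (v ⬝ᵥ sbar x - f x))
      (F' := fun (v : Fin m → ℝ) x =>
        (Real.exp (v ⬝ᵥ sbar x) * (v ⬝ᵥ sbar x - f x + 1)) • dotCLM (sbar x))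
      (bound := fun x => ((m + 1) * (1 + |η0|)) * (Real.exp (-η0) * g x))
    · exact Filter.Eventually.of_forall fun v =>
        ((hmeasexp v).mul ((hmdot v).sub hf)).aestronglyMeasurable
    · -- integrability at center
      refine Integrable.mono' ((hg.const_mul (Real.exp (-η0))).const_mul (1 + |η0|))
        (((hmeasexp ηbar).mul ((hmdot ηbar).sub hf)).aestronglyMeasurable) ?_
      refine hcenter.mono fun x hx => ?_
      have hE := Real.exp_pos (ηbar ⬝ᵥ sbar x)
      have hb := abs_nonneg (η0 + ηbar ⬝ᵥ sbar x)
      have hfx := abs_nonneg (f x)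
      have hη := abs_nonneg η0
      rw [Real.norm_eq_abs, abs_mul, abs_of_pos hE]
      have c0 : |ηbar ⬝ᵥ sbar x - f x|
          ≤ (1 + |η0|) * ((2 + S x) * (1 + |η0 + ηbar ⬝ᵥ sbar x| + |f x|)) := by
        have h1 := habs' ηbar x
        nlinarith [hS0 x, mul_nonneg hη hb, mul_nonneg hη hfx,
          mul_nonneg (mul_nonneg (by linarith : (0:ℝ) ≤ 1 + |η0|)
            (by linarith [hS0 x] : (0:ℝ) ≤ 1 + S x))
            (by linarith : (0:ℝ) ≤ 1 + |η0 + ηbar ⬝ᵥ sbar x| + |f x|)]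
      calc Real.exp (ηbar ⬝ᵥ sbar x) * |ηbar ⬝ᵥ sbar x - f x|
          ≤ Real.exp (ηbar ⬝ᵥ sbar x)
            * ((1 + |η0|) * ((2 + S x) * (1 + |η0 + ηbar ⬝ᵥ sbar x| + |f x|))) :=
            mul_le_mul_of_nonneg_left c0 hE.le
        _ = (1 + |η0|) * ((2 + S x) * (1 + |η0 + ηbar ⬝ᵥ sbar x| + |f x|)
            * Real.exp (ηbar ⬝ᵥ sbar x)) := by ring
        _ ≤ (1 + |η0|) * (Real.exp (-η0) * g x) :=
            mul_le_mul_of_nonneg_left hx (by linarith)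
    · exact hWsm.aestronglyMeasurable
    · -- bound
      refine hkey.mono fun x hx v hv => ?_
      have hE := Real.exp_pos (v ⬝ᵥ sbar x)
      have hx' := hx v hv
      have hb := abs_nonneg (η0 + v ⬝ᵥ sbar x)
      have hfx := abs_nonneg (f x)
      have hη := abs_nonneg η0
      have h1 : ‖(Real.exp (v ⬝ᵥ sbar x) * (v ⬝ᵥ sbar x - f x + 1)) • dotCLM (sbar x)‖
          ≤ (Real.exp (v ⬝ᵥ sbar x) * (1 + |η0 + v ⬝ᵥ sbar x| + |η0| + |f x|))
            * (m + S x) := by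
        refine (norm_smul_le (Real.exp (v ⬝ᵥ sbar x) * (v ⬝ᵥ sbar x - f x + 1)) (dotCLM (sbar x))).trans ?_
        rw [Real.norm_eq_abs, abs_mul, abs_of_pos hE]
        refine mul_le_mul ?_ ((norm_dotCLM_le _).trans (hsumabs x)) (norm_nonneg _) ?_
        · refine mul_le_mul_of_nonneg_left ?_ hE.le
          have h2 := habs' v x
          calc |v ⬝ᵥ sbar x - f x + 1| ≤ |v ⬝ᵥ sbar x - f x| + |(1:ℝ)| := abs_add_le _ _
            _ ≤ 1 + |η0 + v ⬝ᵥ sbar x| + |η0| + |f x| := by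
                rw [abs_one]; linarith
        · have := abs_nonneg (v ⬝ᵥ sbar x - f x + 1)
          positivity
      refine h1.trans ?_
      have key1 : 1 + |η0 + v ⬝ᵥ sbar x| + |η0| + |f x|
          ≤ (1 + |η0|) * (1 + |η0 + v ⬝ᵥ sbar x| + |f x|) := by
        nlinarith [mul_nonneg hη hb, mul_nonneg hη hfx]
      have key2 : (↑m + S x : ℝ) ≤ (↑m + 1) * (2 + S x) := by
        nlinarith [hS0 x, mul_nonneg hm0 (hS0 x)]
      calc (Real.exp (v ⬝ᵥ sbar x) * (1 + |η0 + v ⬝ᵥ sbar x| + |η0| + |f x|)) * (↑m + S x)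
          ≤ (Real.exp (v ⬝ᵥ sbar x) * (1 + |η0 + v ⬝ᵥ sbar x| + |η0| + |f x|))
            * ((↑m + 1) * (2 + S x)) := by
            refine mul_le_mul_of_nonneg_left key2 ?_
            positivity
        _ ≤ (Real.exp (v ⬝ᵥ sbar x) * ((1 + |η0|) * (1 + |η0 + v ⬝ᵥ sbar x| + |f x|)))
            * ((↑m + 1) * (2 + S x)) := by
            refine mul_le_mul_of_nonneg_right (mul_le_mul_of_nonneg_left key1 hE.le) ?_
            nlinarith [hS0 x]
        _ = ((↑m + 1) * (1 + |η0|)) * ((2 + S x) * (1 + |η0 + v ⬝ᵥ sbar x| + |f x|)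
            * Real.exp (v ⬝ᵥ sbar x)) := by ring
        _ ≤ ((↑m + 1) * (1 + |η0|)) * (Real.exp (-η0) * g x) := by
            refine mul_le_mul_of_nonneg_left hx' ?_
            positivity
    · exact (hg.const_mul _).const_mul _
    · exact Filter.Eventually.of_forall fun x v _ => hWptdiff x v
  exact ⟨_, _, hZ, hW⟩

lemma key_form' (sbar : X → Fin m → ℝ) (f g : X → ℝ) (η0 : ℝ) (ηbar : Fin m → ℝ)
    (ε : ℝ)
    (hdom : ∀ᵐ x ∂μ, ∀ η' ∈ Metric.ball (Fin.cons η0 ηbar : Fin (m + 1) → ℝ) ε,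
      (1 + ∑ i, ((Fin.cons 1 (sbar x) : Fin (m + 1) → ℝ) i) ^ 2)
          * (1 + |η' ⬝ᵥ (Fin.cons 1 (sbar x) : Fin (m + 1) → ℝ)| + |f x|)
          * Real.exp (η' ⬝ᵥ (Fin.cons 1 (sbar x) : Fin (m + 1) → ℝ)) ≤ g x) :
    ∀ᵐ x ∂μ, ∀ η' ∈ Metric.ball (Fin.cons η0 ηbar : Fin (m + 1) → ℝ) ε,
      (2 + ∑ i, (sbar x i) ^ 2) * (1 + |η' 0 + Fin.tail η' ⬝ᵥ sbar x| + |f x|)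
        * Real.exp (Fin.tail η' ⬝ᵥ sbar x) ≤ Real.exp (-(η' 0)) * g x := by
  refine hdom.mono fun x hx η' hη' => ?_
  have hmem := hx η' hη'
  have hdot : η' ⬝ᵥ (Fin.cons 1 (sbar x) : Fin (m + 1) → ℝ)
      = η' 0 + Fin.tail η' ⬝ᵥ sbar x := by
    rw [cons_dot]; ring
  have hsum : (∑ i, ((Fin.cons 1 (sbar x) : Fin (m + 1) → ℝ) i) ^ 2)
      = 1 + ∑ i, (sbar x i) ^ 2 := by
    rw [Fin.sum_univ_succ]; simp
  rw [hdot, hsum] at hmem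
  rw [Real.exp_neg, ← div_eq_inv_mul, le_div_iff₀ (Real.exp_pos (η' 0))]
  calc (2 + ∑ i, sbar x i ^ 2) * (1 + |η' 0 + Fin.tail η' ⬝ᵥ sbar x| + |f x|)
        * Real.exp (Fin.tail η' ⬝ᵥ sbar x) * Real.exp (η' 0)
      = (1 + (1 + ∑ i, sbar x i ^ 2)) * (1 + |η' 0 + Fin.tail η' ⬝ᵥ sbar x| + |f x|)
        * Real.exp (η' 0 + Fin.tail η' ⬝ᵥ sbar x) := by
        rw [Real.exp_add]; ring
    _ ≤ g x := hmem

lemma integrable_pair {sbar : X → Fin m → ℝ} (hsbar : Measurable sbar)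
    {f : X → ℝ} (hf : Measurable f) (t0 : ℝ) (v : Fin m → ℝ)
    {G : X → ℝ} (hG : Integrable G μ)
    (hae : ∀ᵐ x ∂μ, (2 + ∑ i, (sbar x i) ^ 2) * (1 + |t0 + v ⬝ᵥ sbar x| + |f x|)
      * Real.exp (v ⬝ᵥ sbar x) ≤ G x) :
    Integrable (fun x => Real.exp (v ⬝ᵥ sbar x)) μ ∧
      Integrable (fun x => Real.exp (v ⬝ᵥ sbar x) * (v ⬝ᵥ sbar x - f x)) μ := by
  have hmdot := measurable_dot hsbar
  have hmexp : Measurable fun x => Real.exp (v ⬝ᵥ sbar x) :=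
    Real.measurable_exp.comp (hmdot v)
  have hS0 : ∀ x, (0:ℝ) ≤ ∑ i, (sbar x i) ^ 2 :=
    fun x => Finset.sum_nonneg fun i _ => sq_nonneg _
  constructor
  · refine Integrable.mono' hG hmexp.aestronglyMeasurable ?_
    refine hae.mono fun x hx => ?_
    have hE := Real.exp_pos (v ⬝ᵥ sbar x)
    rw [Real.norm_eq_abs, abs_of_pos hE]
    nlinarith [hS0 x, abs_nonneg (t0 + v ⬝ᵥ sbar x), abs_nonneg (f x),
      mul_pos hE (by linarith [hS0 x] : (0:ℝ) < 1 + ∑ i, (sbar x i) ^ 2),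
      mul_nonneg (mul_nonneg (by linarith [hS0 x] : (0:ℝ) ≤ 2 + ∑ i, (sbar x i) ^ 2) hE.le)
        (by linarith [abs_nonneg (t0 + v ⬝ᵥ sbar x), abs_nonneg (f x)] :
          (0:ℝ) ≤ |t0 + v ⬝ᵥ sbar x| + |f x|)]
  · refine Integrable.mono' (hG.const_mul (1 + |t0|))
      ((hmexp.mul ((hmdot v).sub hf)).aestronglyMeasurable) ?_
    refine hae.mono fun x hx => ?_
    have hE := Real.exp_pos (v ⬝ᵥ sbar x)
    have hb := abs_nonneg (t0 + v ⬝ᵥ sbar x)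
    have hfx := abs_nonneg (f x)
    have hη := abs_nonneg t0
    rw [Real.norm_eq_abs, abs_mul, abs_of_pos hE]
    have habs : |v ⬝ᵥ sbar x - f x| ≤ |t0 + v ⬝ᵥ sbar x| + |t0| + |f x| := by
      have he : v ⬝ᵥ sbar x - f x = (t0 + v ⬝ᵥ sbar x) + (-t0) + (-(f x)) := by ring
      rw [he]
      calc |(t0 + v ⬝ᵥ sbar x) + (-t0) + (-(f x))|
          ≤ |(t0 + v ⬝ᵥ sbar x) + (-t0)| + |(-(f x))| := abs_add_le _ _
        _ ≤ |t0 + v ⬝ᵥ sbar x| + |(-t0)| + |(-(f x))| := by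
            have := abs_add_le (t0 + v ⬝ᵥ sbar x) (-t0); linarith
        _ = |t0 + v ⬝ᵥ sbar x| + |t0| + |f x| := by rw [abs_neg, abs_neg]
    have c0 : |v ⬝ᵥ sbar x - f x|
        ≤ (1 + |t0|) * ((2 + ∑ i, (sbar x i) ^ 2) * (1 + |t0 + v ⬝ᵥ sbar x| + |f x|)) := by
      nlinarith [hS0 x, mul_nonneg hη hb, mul_nonneg hη hfx,
        mul_nonneg (mul_nonneg (by linarith : (0:ℝ) ≤ 1 + |t0|)
          (by linarith [hS0 x] : (0:ℝ) ≤ 1 + ∑ i, (sbar x i) ^ 2))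
          (by linarith : (0:ℝ) ≤ 1 + |t0 + v ⬝ᵥ sbar x| + |f x|)]
    calc Real.exp (v ⬝ᵥ sbar x) * |v ⬝ᵥ sbar x - f x|
        ≤ Real.exp (v ⬝ᵥ sbar x)
          * ((1 + |t0|) * ((2 + ∑ i, (sbar x i) ^ 2) * (1 + |t0 + v ⬝ᵥ sbar x| + |f x|))) :=
          mul_le_mul_of_nonneg_left c0 hE.le
      _ = (1 + |t0|) * ((2 + ∑ i, (sbar x i) ^ 2) * (1 + |t0 + v ⬝ᵥ sbar x| + |f x|)
          * Real.exp (v ⬝ᵥ sbar x)) := by ring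
      _ ≤ (1 + |t0|) * G x := mul_le_mul_of_nonneg_left hx (by linarith)

def tailCLM (m : ℕ) : (Fin (m + 1) → ℝ) →L[ℝ] (Fin m → ℝ) :=
  ContinuousLinearMap.pi fun i => ContinuousLinearMap.proj i.succ

@[simp] lemma tailCLM_apply (u : Fin (m + 1) → ℝ) : tailCLM m u = Fin.tail u := rfl

lemma tail_mem_ball {c : Fin (m + 1) → ℝ} {ε : ℝ} {η' : Fin (m + 1) → ℝ}
    (h : η' ∈ Metric.ball c ε) : Fin.tail η' ∈ Metric.ball (Fin.tail c) ε := by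
  rw [Metric.mem_ball] at h ⊢
  have hle : dist (Fin.tail η') (Fin.tail c) ≤ dist η' c := by
    rw [dist_pi_le_iff dist_nonneg]
    intro j
    exact dist_le_pi_dist η' c j.succ
  linarith

lemma swap_dom (sbar : X → Fin m → ℝ) (f g : X → ℝ)
    (c : Fin (m + 1) → ℝ) (U : Set (Fin (m + 1) → ℝ)) (hU : U ∈ nhds c)
    (hdom : ∀ η' ∈ U, ∀ᵐ x ∂μ,
      (1 + ∑ i, ((Fin.cons 1 (sbar x) : Fin (m + 1) → ℝ) i) ^ 2)
          * (1 + |η' ⬝ᵥ (Fin.cons 1 (sbar x) : Fin (m + 1) → ℝ)| + |f x|)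
          * Real.exp (η' ⬝ᵥ (Fin.cons 1 (sbar x) : Fin (m + 1) → ℝ)) ≤ g x) :
    ∃ ε : ℝ, 0 < ε ∧ ∀ᵐ x ∂μ, ∀ η' ∈ Metric.ball c ε,
      (1 + ∑ i, ((Fin.cons 1 (sbar x) : Fin (m + 1) → ℝ) i) ^ 2)
          * (1 + |η' ⬝ᵥ (Fin.cons 1 (sbar x) : Fin (m + 1) → ℝ)| + |f x|)
          * Real.exp (η' ⬝ᵥ (Fin.cons 1 (sbar x) : Fin (m + 1) → ℝ)) ≤ g x := by
  obtain ⟨ε, εpos, hball⟩ := Metric.mem_nhds_iff.1 hU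
  refine ⟨ε, εpos, ?_⟩
  obtain ⟨D, Dcount, Ddense⟩ := TopologicalSpace.exists_countable_dense (Fin (m + 1) → ℝ)
  set T : Set (Fin (m + 1) → ℝ) := Metric.ball c ε ∩ D with hT
  have hTcount : T.Countable := Dcount.mono Set.inter_subset_right
  have hTU : T ⊆ U := fun η' hη' => hball hη'.1
  have hae : ∀ᵐ x ∂μ, ∀ η' ∈ T, (1 + ∑ i, ((Fin.cons 1 (sbar x) : Fin (m + 1) → ℝ) i) ^ 2)
      * (1 + |η' ⬝ᵥ (Fin.cons 1 (sbar x) : Fin (m + 1) → ℝ)| + |f x|)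
      * Real.exp (η' ⬝ᵥ (Fin.cons 1 (sbar x) : Fin (m + 1) → ℝ)) ≤ g x :=
    (ae_ball_iff hTcount).2 fun η' hη' => hdom η' (hTU hη')
  refine hae.mono fun x hx η' hη' => ?_
  -- continuity argument
  set w : Fin (m + 1) → ℝ := Fin.cons 1 (sbar x) with hw
  have hcont : Continuous fun η' : Fin (m + 1) → ℝ =>
      (1 + ∑ i, w i ^ 2) * (1 + |η' ⬝ᵥ w| + |f x|) * Real.exp (η' ⬝ᵥ w) := by
    have hdotc : Continuous fun η' : Fin (m + 1) → ℝ => η' ⬝ᵥ w := by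
      have : (fun η' : Fin (m + 1) → ℝ => η' ⬝ᵥ w)
          = fun η' => dotCLM w η' := by
        funext u; rw [dotCLM_apply]
      rw [this]; exact (dotCLM w).continuous
    fun_prop
  have hclosed : IsClosed {η' : Fin (m + 1) → ℝ |
      (1 + ∑ i, w i ^ 2) * (1 + |η' ⬝ᵥ w| + |f x|) * Real.exp (η' ⬝ᵥ w) ≤ g x} :=
    isClosed_le hcont continuous_const
  have hsub : Metric.ball c ε ⊆ closure T := by
    simpa [hT, Set.inter_comm] using Ddense.open_subset_closure_inter (Metric.isOpen_ball (x := c) (ε := ε))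
  have hTsub : T ⊆ {η' : Fin (m + 1) → ℝ |
      (1 + ∑ i, w i ^ 2) * (1 + |η' ⬝ᵥ w| + |f x|) * Real.exp (η' ⬝ᵥ w) ≤ g x} :=
    fun η'' hη'' => hx η'' hη''
  exact (hclosed.closure_subset_iff.2 hTsub) (hsub hη')


end Stmt2Aux

set_option maxHeartbeats 1000000 in
/-- Write `η = (η⁰, η̄) ∈ ℝ × ℝ^m` and `s = (1, s̄)`, and let
`K(η̄) = ∫ q̄_{η̄} log(q̄_{η̄}/π̄) dμ` be the normalised KL objective, where
`q̄_{η̄} = e^{η̄⬝s̄}/∫ e^{η̄⬝s̄} dμ` and `π̄ = e^f/∫ e^f dμ`. Under the local domination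
hypothesis at `η`: (i) if the gradient of `uKL` vanishes at `η` then the gradient of `K`
vanishes at `η̄`; (ii) conversely, if the gradient of `K` vanishes at `η̄` and the partial
derivative of `uKL` in `η⁰` vanishes at `η`, then the full gradient of `uKL` vanishes at `η`. -/
theorem stmt2
    {X : Type*} [MeasurableSpace X] (μ : Measure X) [SigmaFinite μ]
    {m : ℕ} (sbar : X → Fin m → ℝ) (hsbar : Measurable sbar)
    (f : X → ℝ) (hf : Measurable f)
    (hπ0 : 0 < ∫ x, Real.exp (f x) ∂μ)
    (hπ1 : Integrable (fun x => Real.exp (f x)) μ)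
    (η0 : ℝ) (ηbar : Fin m → ℝ)
    -- local domination hypothesis at `η = (η0, ηbar)`
    (U : Set (Fin (m + 1) → ℝ)) (hU : U ∈ nhds (Fin.cons η0 ηbar))
    (g : X → ℝ) (hg : Integrable g μ)
    (hdom : ∀ η' ∈ U, ∀ᵐ x ∂μ,
      (1 + ∑ i, ((Fin.cons 1 (sbar x) : Fin (m + 1) → ℝ) i) ^ 2)
          * (1 + |η' ⬝ᵥ (Fin.cons 1 (sbar x) : Fin (m + 1) → ℝ)| + |f x|)
          * Real.exp (η' ⬝ᵥ (Fin.cons 1 (sbar x) : Fin (m + 1) → ℝ)) ≤ g x) :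
    -- (i) critical point of uKL gives critical point of K
    (HasFDerivAt
        (fun η' : Fin (m + 1) → ℝ =>
          (∫ x, Real.exp (η' ⬝ᵥ (Fin.cons 1 (sbar x) : Fin (m + 1) → ℝ))
              * (η' ⬝ᵥ (Fin.cons 1 (sbar x) : Fin (m + 1) → ℝ) - f x) ∂μ)
            + (∫ x, Real.exp (f x) ∂μ)
            - ∫ x, Real.exp (η' ⬝ᵥ (Fin.cons 1 (sbar x) : Fin (m + 1) → ℝ)) ∂μ)
        (0 : (Fin (m + 1) → ℝ) →L[ℝ] ℝ) (Fin.cons η0 ηbar) →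
      HasFDerivAt
        (fun ηb : Fin m → ℝ =>
          ∫ x, (Real.exp (ηb ⬝ᵥ sbar x) / ∫ y, Real.exp (ηb ⬝ᵥ sbar y) ∂μ)
            * Real.log ((Real.exp (ηb ⬝ᵥ sbar x) / ∫ y, Real.exp (ηb ⬝ᵥ sbar y) ∂μ)
                / (Real.exp (f x) / ∫ y, Real.exp (f y) ∂μ)) ∂μ)
        (0 : (Fin m → ℝ) →L[ℝ] ℝ) ηbar)
    ∧
    -- (ii) critical point of K together with vanishing ∂_{η⁰} uKL gives critical point of uKL
    (HasFDerivAt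
        (fun ηb : Fin m → ℝ =>
          ∫ x, (Real.exp (ηb ⬝ᵥ sbar x) / ∫ y, Real.exp (ηb ⬝ᵥ sbar y) ∂μ)
            * Real.log ((Real.exp (ηb ⬝ᵥ sbar x) / ∫ y, Real.exp (ηb ⬝ᵥ sbar y) ∂μ)
                / (Real.exp (f x) / ∫ y, Real.exp (f y) ∂μ)) ∂μ)
        (0 : (Fin m → ℝ) →L[ℝ] ℝ) ηbar →
      HasDerivAt
        (fun t : ℝ =>
          (∫ x, Real.exp ((Fin.cons t ηbar : Fin (m + 1) → ℝ) ⬝ᵥ (Fin.cons 1 (sbar x) : Fin (m + 1) → ℝ))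
              * ((Fin.cons t ηbar : Fin (m + 1) → ℝ) ⬝ᵥ (Fin.cons 1 (sbar x) : Fin (m + 1) → ℝ) - f x) ∂μ)
            + (∫ x, Real.exp (f x) ∂μ)
            - ∫ x, Real.exp ((Fin.cons t ηbar : Fin (m + 1) → ℝ) ⬝ᵥ (Fin.cons 1 (sbar x) : Fin (m + 1) → ℝ)) ∂μ)
        0 η0 →
      HasFDerivAt
        (fun η' : Fin (m + 1) → ℝ =>
          (∫ x, Real.exp (η' ⬝ᵥ (Fin.cons 1 (sbar x) : Fin (m + 1) → ℝ))
              * (η' ⬝ᵥ (Fin.cons 1 (sbar x) : Fin (m + 1) → ℝ) - f x) ∂μ)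
            + (∫ x, Real.exp (f x) ∂μ)
            - ∫ x, Real.exp (η' ⬝ᵥ (Fin.cons 1 (sbar x) : Fin (m + 1) → ℝ)) ∂μ)
        (0 : (Fin (m + 1) → ℝ) →L[ℝ] ℝ) (Fin.cons η0 ηbar)) := by
  classical
  have hμ : μ ≠ 0 := by
    intro h
    rw [h] at hπ0
    simp at hπ0
  haveI : NeZero μ := ⟨hμ⟩
  obtain ⟨ε, εpos, hdomball⟩ := Stmt2Aux.swap_dom sbar f g _ U hU hdom
  obtain ⟨Z', W', hZ, hW⟩ := Stmt2Aux.main_deriv sbar hsbar f hf η0 ηbar g hg ε εpos hdomball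
  have hkey' := Stmt2Aux.key_form' (μ := μ) sbar f g η0 ηbar ε hdomball
  have hpair : ∀ η' ∈ Metric.ball (Fin.cons η0 ηbar : Fin (m + 1) → ℝ) ε,
      Integrable (fun x => Real.exp (Fin.tail η' ⬝ᵥ sbar x)) μ ∧
      Integrable (fun x => Real.exp (Fin.tail η' ⬝ᵥ sbar x) * (Fin.tail η' ⬝ᵥ sbar x - f x)) μ := by
    intro η' hη'
    exact Stmt2Aux.integrable_pair hsbar hf (η' 0) (Fin.tail η')
      (hg.const_mul (Real.exp (-(η' 0))))
      (hkey'.mono fun x hx => hx η' hη')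
  have hcmem : (Fin.cons η0 ηbar : Fin (m + 1) → ℝ)
      ∈ Metric.ball (Fin.cons η0 ηbar : Fin (m + 1) → ℝ) ε := Metric.mem_ball_self εpos
  have hZc : Integrable (fun x => Real.exp (ηbar ⬝ᵥ sbar x)) μ := by
    have := (hpair _ hcmem).1
    simpa [Fin.tail_cons] using this
  have hZ0pos : 0 < ∫ x, Real.exp (ηbar ⬝ᵥ sbar x) ∂μ := integral_exp_pos hZc
  -- closed form for uKL on the ball
  have hukl_eq : ∀ η' ∈ Metric.ball (Fin.cons η0 ηbar : Fin (m + 1) → ℝ) ε,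
      ((∫ x, Real.exp (η' ⬝ᵥ (Fin.cons 1 (sbar x) : Fin (m + 1) → ℝ))
          * (η' ⬝ᵥ (Fin.cons 1 (sbar x) : Fin (m + 1) → ℝ) - f x) ∂μ)
        + (∫ x, Real.exp (f x) ∂μ)
        - ∫ x, Real.exp (η' ⬝ᵥ (Fin.cons 1 (sbar x) : Fin (m + 1) → ℝ)) ∂μ)
      = Real.exp (η' 0) * (η' 0 * (∫ x, Real.exp (Fin.tail η' ⬝ᵥ sbar x) ∂μ)
          + (∫ x, Real.exp (Fin.tail η' ⬝ᵥ sbar x) * (Fin.tail η' ⬝ᵥ sbar x - f x) ∂μ)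
          - ∫ x, Real.exp (Fin.tail η' ⬝ᵥ sbar x) ∂μ)
        + ∫ x, Real.exp (f x) ∂μ := by
    intro η' hη'
    obtain ⟨h1, h2⟩ := hpair η' hη'
    have hd : ∀ x, η' ⬝ᵥ (Fin.cons 1 (sbar x) : Fin (m + 1) → ℝ)
        = η' 0 + Fin.tail η' ⬝ᵥ sbar x := fun x => by rw [Stmt2Aux.cons_dot]; ring
    have eA : (∫ x, Real.exp (η' ⬝ᵥ (Fin.cons 1 (sbar x) : Fin (m + 1) → ℝ))
          * (η' ⬝ᵥ (Fin.cons 1 (sbar x) : Fin (m + 1) → ℝ) - f x) ∂μ)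
        = Real.exp (η' 0) * (η' 0 * (∫ x, Real.exp (Fin.tail η' ⬝ᵥ sbar x) ∂μ)
          + ∫ x, Real.exp (Fin.tail η' ⬝ᵥ sbar x) * (Fin.tail η' ⬝ᵥ sbar x - f x) ∂μ) := by
      rw [show (fun x => Real.exp (η' ⬝ᵥ (Fin.cons 1 (sbar x) : Fin (m + 1) → ℝ))
          * (η' ⬝ᵥ (Fin.cons 1 (sbar x) : Fin (m + 1) → ℝ) - f x))
          = fun x => Real.exp (η' 0) * (η' 0 * Real.exp (Fin.tail η' ⬝ᵥ sbar x)
            + Real.exp (Fin.tail η' ⬝ᵥ sbar x) * (Fin.tail η' ⬝ᵥ sbar x - f x)) from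
        funext fun x => by rw [hd x, Real.exp_add]; ring]
      rw [MeasureTheory.integral_const_mul _ _, integral_add (h1.const_mul _) h2, MeasureTheory.integral_const_mul _ _]
    have eB : (∫ x, Real.exp (η' ⬝ᵥ (Fin.cons 1 (sbar x) : Fin (m + 1) → ℝ)) ∂μ)
        = Real.exp (η' 0) * ∫ x, Real.exp (Fin.tail η' ⬝ᵥ sbar x) ∂μ := by
      rw [show (fun x => Real.exp (η' ⬝ᵥ (Fin.cons 1 (sbar x) : Fin (m + 1) → ℝ)))
          = fun x => Real.exp (η' 0) * Real.exp (Fin.tail η' ⬝ᵥ sbar x) from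
        funext fun x => by rw [hd x, Real.exp_add]]
      rw [MeasureTheory.integral_const_mul]
    rw [eA, eB]
    ring
  -- eventual equality for uKL near the center
  have hev : (fun η' : Fin (m + 1) → ℝ =>
      (∫ x, Real.exp (η' ⬝ᵥ (Fin.cons 1 (sbar x) : Fin (m + 1) → ℝ))
          * (η' ⬝ᵥ (Fin.cons 1 (sbar x) : Fin (m + 1) → ℝ) - f x) ∂μ)
        + (∫ x, Real.exp (f x) ∂μ)
        - ∫ x, Real.exp (η' ⬝ᵥ (Fin.cons 1 (sbar x) : Fin (m + 1) → ℝ)) ∂μ)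
      =ᶠ[nhds (Fin.cons η0 ηbar : Fin (m + 1) → ℝ)]
      (fun η' : Fin (m + 1) → ℝ =>
        Real.exp (η' 0) * (η' 0 * (∫ x, Real.exp (Fin.tail η' ⬝ᵥ sbar x) ∂μ)
          + (∫ x, Real.exp (Fin.tail η' ⬝ᵥ sbar x) * (Fin.tail η' ⬝ᵥ sbar x - f x) ∂μ)
          - ∫ x, Real.exp (Fin.tail η' ⬝ᵥ sbar x) ∂μ)
        + ∫ x, Real.exp (f x) ∂μ) :=
    Filter.eventuallyEq_of_mem (Metric.ball_mem_nhds _ εpos) fun η' hη' => hukl_eq η' hη'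
  -- derivative of the closed form of uKL
  set Z0 : ℝ := ∫ x, Real.exp (ηbar ⬝ᵥ sbar x) ∂μ with hZ0def
  set W0 : ℝ := ∫ x, Real.exp (ηbar ⬝ᵥ sbar x) * (ηbar ⬝ᵥ sbar x - f x) ∂μ with hW0def
  set ZT : (Fin (m + 1) → ℝ) →L[ℝ] ℝ := Z'.comp (Stmt2Aux.tailCLM m) with hZTdef
  set WT : (Fin (m + 1) → ℝ) →L[ℝ] ℝ := W'.comp (Stmt2Aux.tailCLM m) with hWTdef
  set P0 : (Fin (m + 1) → ℝ) →L[ℝ] ℝ := ContinuousLinearMap.proj 0 with hP0def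
  have hZt : HasFDerivAt (fun η' : Fin (m + 1) → ℝ =>
      ∫ x, Real.exp (Fin.tail η' ⬝ᵥ sbar x) ∂μ) ZT (Fin.cons η0 ηbar) := by
    have h0 : HasFDerivAt (fun v : Fin m → ℝ => ∫ x, Real.exp (v ⬝ᵥ sbar x) ∂μ) Z'
        (Stmt2Aux.tailCLM m (Fin.cons η0 ηbar)) := by
      rw [Stmt2Aux.tailCLM_apply, Fin.tail_cons]; exact hZ
    exact (h0.comp (Fin.cons η0 ηbar) (Stmt2Aux.tailCLM m).hasFDerivAt).congr_of_eventuallyEq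
      (Filter.Eventually.of_forall fun u => rfl)
  have hWt : HasFDerivAt (fun η' : Fin (m + 1) → ℝ =>
      ∫ x, Real.exp (Fin.tail η' ⬝ᵥ sbar x) * (Fin.tail η' ⬝ᵥ sbar x - f x) ∂μ) WT
      (Fin.cons η0 ηbar) := by
    have h0 : HasFDerivAt (fun v : Fin m → ℝ =>
        ∫ x, Real.exp (v ⬝ᵥ sbar x) * (v ⬝ᵥ sbar x - f x) ∂μ) W'
        (Stmt2Aux.tailCLM m (Fin.cons η0 ηbar)) := by
      rw [Stmt2Aux.tailCLM_apply, Fin.tail_cons]; exact hW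
    exact (h0.comp (Fin.cons η0 ηbar) (Stmt2Aux.tailCLM m).hasFDerivAt).congr_of_eventuallyEq
      (Filter.Eventually.of_forall fun u => rfl)
  have hA : HasFDerivAt (fun η' : Fin (m + 1) → ℝ => η' 0) P0 (Fin.cons η0 ηbar) :=
    P0.hasFDerivAt
  have hEexp : HasFDerivAt (fun η' : Fin (m + 1) → ℝ => Real.exp (η' 0))
      (Real.exp η0 • P0) (Fin.cons η0 ηbar) := by
    have := hA.exp
    simpa using this
  have hmul : HasFDerivAt (fun η' : Fin (m + 1) → ℝ =>
      η' 0 * ∫ x, Real.exp (Fin.tail η' ⬝ᵥ sbar x) ∂μ)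
      (η0 • ZT + Z0 • P0) (Fin.cons η0 ηbar) := by
    have : HasFDerivAt (fun η' : Fin (m + 1) → ℝ =>
        η' 0 * ∫ x, Real.exp (Fin.tail η' ⬝ᵥ sbar x) ∂μ) _ _ := hA.mul hZt
    simpa [← hZ0def] using this
  have hsum1 : HasFDerivAt (fun η' : Fin (m + 1) → ℝ =>
      η' 0 * (∫ x, Real.exp (Fin.tail η' ⬝ᵥ sbar x) ∂μ)
        + (∫ x, Real.exp (Fin.tail η' ⬝ᵥ sbar x) * (Fin.tail η' ⬝ᵥ sbar x - f x) ∂μ)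
        - ∫ x, Real.exp (Fin.tail η' ⬝ᵥ sbar x) ∂μ)
      (η0 • ZT + Z0 • P0 + WT - ZT) (Fin.cons η0 ηbar) := (hmul.add hWt).sub hZt
  have hG : HasFDerivAt (fun η' : Fin (m + 1) → ℝ =>
      Real.exp (η' 0) * (η' 0 * (∫ x, Real.exp (Fin.tail η' ⬝ᵥ sbar x) ∂μ)
        + (∫ x, Real.exp (Fin.tail η' ⬝ᵥ sbar x) * (Fin.tail η' ⬝ᵥ sbar x - f x) ∂μ)
        - ∫ x, Real.exp (Fin.tail η' ⬝ᵥ sbar x) ∂μ)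
      + ∫ x, Real.exp (f x) ∂μ)
      (Real.exp η0 • (η0 • ZT + Z0 • P0 + WT - ZT)
        + (η0 * Z0 + W0 - Z0) • (Real.exp η0 • P0)) (Fin.cons η0 ηbar) := by
    have := (hEexp.mul hsum1).add_const (∫ x, Real.exp (f x) ∂μ)
    simpa [← hZ0def, ← hW0def] using this
  -- evaluation of the closed-form derivative
  have hDapply : ∀ u : Fin (m + 1) → ℝ,
      (Real.exp η0 • (η0 • ZT + Z0 • P0 + WT - ZT)
        + (η0 * Z0 + W0 - Z0) • (Real.exp η0 • P0)) u
      = Real.exp η0 * (η0 * Z' (Fin.tail u) + Z0 * u 0 + W' (Fin.tail u) - Z' (Fin.tail u))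
        + (η0 * Z0 + W0 - Z0) * (Real.exp η0 * u 0) := by
    intro u
    simp [hZTdef, hWTdef, hP0def, ContinuousLinearMap.add_apply, ContinuousLinearMap.sub_apply,
      ContinuousLinearMap.smul_apply, ContinuousLinearMap.comp_apply,
      ContinuousLinearMap.proj_apply, Stmt2Aux.tailCLM_apply, smul_eq_mul]
  -- closed form for K near ηbar
  have hKeq : ∀ v ∈ Metric.ball ηbar ε,
      (∫ x, (Real.exp (v ⬝ᵥ sbar x) / ∫ y, Real.exp (v ⬝ᵥ sbar y) ∂μ)
        * Real.log ((Real.exp (v ⬝ᵥ sbar x) / ∫ y, Real.exp (v ⬝ᵥ sbar y) ∂μ)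
            / (Real.exp (f x) / ∫ y, Real.exp (f y) ∂μ)) ∂μ)
      = (∫ x, Real.exp (v ⬝ᵥ sbar x) * (v ⬝ᵥ sbar x - f x) ∂μ)
          / (∫ x, Real.exp (v ⬝ᵥ sbar x) ∂μ)
        - Real.log (∫ x, Real.exp (v ⬝ᵥ sbar x) ∂μ)
        + Real.log (∫ x, Real.exp (f x) ∂μ) := by
    intro v hv
    obtain ⟨h1, h2⟩ := hpair (Fin.cons (η0 : ℝ) v) (Stmt2Aux.cons_mem_ball hv)
    rw [Fin.tail_cons] at h1 h2
    have hZv : 0 < ∫ x, Real.exp (v ⬝ᵥ sbar x) ∂μ := integral_exp_pos h1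
    have hpt : ∀ x, (Real.exp (v ⬝ᵥ sbar x) / ∫ y, Real.exp (v ⬝ᵥ sbar y) ∂μ)
        * Real.log ((Real.exp (v ⬝ᵥ sbar x) / ∫ y, Real.exp (v ⬝ᵥ sbar y) ∂μ)
            / (Real.exp (f x) / ∫ y, Real.exp (f y) ∂μ))
        = (∫ y, Real.exp (v ⬝ᵥ sbar y) ∂μ)⁻¹
          * (Real.exp (v ⬝ᵥ sbar x) * (v ⬝ᵥ sbar x - f x)
            + (Real.log (∫ y, Real.exp (f y) ∂μ) - Real.log (∫ y, Real.exp (v ⬝ᵥ sbar y) ∂μ))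
              * Real.exp (v ⬝ᵥ sbar x)) := by
      intro x
      rw [Real.log_div (by positivity) (by positivity),
        Real.log_div (Real.exp_ne_zero _) hZv.ne',
        Real.log_div (Real.exp_ne_zero _) hπ0.ne',
        Real.log_exp, Real.log_exp]
      field_simp
      ring
    rw [show (fun x => (Real.exp (v ⬝ᵥ sbar x) / ∫ y, Real.exp (v ⬝ᵥ sbar y) ∂μ)
        * Real.log ((Real.exp (v ⬝ᵥ sbar x) / ∫ y, Real.exp (v ⬝ᵥ sbar y) ∂μ)
            / (Real.exp (f x) / ∫ y, Real.exp (f y) ∂μ)))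
        = fun x => (∫ y, Real.exp (v ⬝ᵥ sbar y) ∂μ)⁻¹
          * (Real.exp (v ⬝ᵥ sbar x) * (v ⬝ᵥ sbar x - f x)
            + (Real.log (∫ y, Real.exp (f y) ∂μ) - Real.log (∫ y, Real.exp (v ⬝ᵥ sbar y) ∂μ))
              * Real.exp (v ⬝ᵥ sbar x)) from funext hpt]
    rw [MeasureTheory.integral_const_mul _ _, integral_add h2 (h1.const_mul _),
      MeasureTheory.integral_const_mul _ _]
    field_simp
    ring
  have hKev : (fun ηb : Fin m → ℝ =>
      ∫ x, (Real.exp (ηb ⬝ᵥ sbar x) / ∫ y, Real.exp (ηb ⬝ᵥ sbar y) ∂μ)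
        * Real.log ((Real.exp (ηb ⬝ᵥ sbar x) / ∫ y, Real.exp (ηb ⬝ᵥ sbar y) ∂μ)
            / (Real.exp (f x) / ∫ y, Real.exp (f y) ∂μ)) ∂μ)
      =ᶠ[nhds ηbar]
      (fun v : Fin m → ℝ =>
        (∫ x, Real.exp (v ⬝ᵥ sbar x) * (v ⬝ᵥ sbar x - f x) ∂μ)
          / (∫ x, Real.exp (v ⬝ᵥ sbar x) ∂μ)
        - Real.log (∫ x, Real.exp (v ⬝ᵥ sbar x) ∂μ)
        + Real.log (∫ x, Real.exp (f x) ∂μ)) :=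
    Filter.eventuallyEq_of_mem (Metric.ball_mem_nhds _ εpos) fun v hv => hKeq v hv
  -- derivative of the closed form of K
  have hinv : HasFDerivAt (fun v : Fin m → ℝ => (∫ x, Real.exp (v ⬝ᵥ sbar x) ∂μ)⁻¹)
      ((-(Z0 ^ 2)⁻¹) • Z') ηbar := by
    have h0 : HasDerivAt (fun y : ℝ => y⁻¹) (-(Z0 ^ 2)⁻¹)
        ((fun v : Fin m → ℝ => ∫ x, Real.exp (v ⬝ᵥ sbar x) ∂μ) ηbar) := by
      simpa [← hZ0def] using hasDerivAt_inv hZ0pos.ne'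
    exact h0.comp_hasFDerivAt ηbar hZ
  have hdiv : HasFDerivAt (fun v : Fin m → ℝ =>
      (∫ x, Real.exp (v ⬝ᵥ sbar x) * (v ⬝ᵥ sbar x - f x) ∂μ)
        * (∫ x, Real.exp (v ⬝ᵥ sbar x) ∂μ)⁻¹)
      (W0 • ((-(Z0 ^ 2)⁻¹) • Z') + Z0⁻¹ • W') ηbar := by
    have : HasFDerivAt (fun v : Fin m → ℝ =>
        (∫ x, Real.exp (v ⬝ᵥ sbar x) * (v ⬝ᵥ sbar x - f x) ∂μ)
          * (∫ x, Real.exp (v ⬝ᵥ sbar x) ∂μ)⁻¹) _ _ := hW.mul hinv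
    simpa [← hZ0def, ← hW0def] using this
  have hlog : HasFDerivAt (fun v : Fin m → ℝ => Real.log (∫ x, Real.exp (v ⬝ᵥ sbar x) ∂μ))
      (Z0⁻¹ • Z') ηbar := by
    have := hZ.log hZ0pos.ne'
    simpa [← hZ0def] using this
  have hKt : HasFDerivAt (fun v : Fin m → ℝ =>
      (∫ x, Real.exp (v ⬝ᵥ sbar x) * (v ⬝ᵥ sbar x - f x) ∂μ)
        / (∫ x, Real.exp (v ⬝ᵥ sbar x) ∂μ)
      - Real.log (∫ x, Real.exp (v ⬝ᵥ sbar x) ∂μ)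
      + Real.log (∫ x, Real.exp (f x) ∂μ))
      ((W0 • ((-(Z0 ^ 2)⁻¹) • Z') + Z0⁻¹ • W') - Z0⁻¹ • Z') ηbar := by
    have := (hdiv.sub hlog).add_const (Real.log (∫ x, Real.exp (f x) ∂μ))
    simpa [div_eq_mul_inv] using this
  constructor
  · -- part (i)
    intro hu
    have hG0 : HasFDerivAt (fun η' : Fin (m + 1) → ℝ =>
        Real.exp (η' 0) * (η' 0 * (∫ x, Real.exp (Fin.tail η' ⬝ᵥ sbar x) ∂μ)
          + (∫ x, Real.exp (Fin.tail η' ⬝ᵥ sbar x) * (Fin.tail η' ⬝ᵥ sbar x - f x) ∂μ)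
          - ∫ x, Real.exp (Fin.tail η' ⬝ᵥ sbar x) ∂μ)
        + ∫ x, Real.exp (f x) ∂μ) (0 : (Fin (m + 1) → ℝ) →L[ℝ] ℝ) (Fin.cons η0 ηbar) :=
      hu.congr_of_eventuallyEq hev.symm
    have hD0 := hG.unique hG0
    have rel0 : η0 * Z0 + W0 = 0 := by
      have h1 := ContinuousLinearMap.ext_iff.mp hD0 (Fin.cons 1 (0 : Fin m → ℝ))
      rw [hDapply] at h1
      simp only [Fin.tail_cons, Fin.cons_zero, map_zero, ContinuousLinearMap.zero_apply] at h1
      have h2 : Real.exp η0 * (η0 * Z0 + W0) = 0 := by linear_combination h1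
      rcases mul_eq_zero.mp h2 with h | h
      · exact absurd h (Real.exp_ne_zero η0)
      · exact h
    have relv : ∀ w : Fin m → ℝ, η0 * Z' w + W' w - Z' w = 0 := by
      intro w
      have h1 := ContinuousLinearMap.ext_iff.mp hD0 (Fin.cons (0 : ℝ) w)
      rw [hDapply] at h1
      simp only [Fin.tail_cons, Fin.cons_zero, ContinuousLinearMap.zero_apply] at h1
      have h2 : Real.exp η0 * (η0 * Z' w + W' w - Z' w) = 0 := by linear_combination h1
      rcases mul_eq_zero.mp h2 with h | h
      · exact absurd h (Real.exp_ne_zero η0)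
      · exact h
    have hDK0 : (W0 • ((-(Z0 ^ 2)⁻¹) • Z') + Z0⁻¹ • W') - Z0⁻¹ • Z'
        = (0 : (Fin m → ℝ) →L[ℝ] ℝ) := by
      ext w
      simp only [ContinuousLinearMap.add_apply, ContinuousLinearMap.sub_apply,
        ContinuousLinearMap.smul_apply, ContinuousLinearMap.zero_apply, smul_eq_mul]
      have e1 : W' w = Z' w - η0 * Z' w := by have := relv w; linarith
      have e2 : W0 = -(η0 * Z0) := by linarith [rel0]
      rw [e1, e2]
      field_simp
      ring
    rw [hDK0] at hKt
    exact hKt.congr_of_eventuallyEq hKev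
  · -- part (ii)
    intro hK ht
    have hKt0 : HasFDerivAt (fun v : Fin m → ℝ =>
        (∫ x, Real.exp (v ⬝ᵥ sbar x) * (v ⬝ᵥ sbar x - f x) ∂μ)
          / (∫ x, Real.exp (v ⬝ᵥ sbar x) ∂μ)
        - Real.log (∫ x, Real.exp (v ⬝ᵥ sbar x) ∂μ)
        + Real.log (∫ x, Real.exp (f x) ∂μ)) (0 : (Fin m → ℝ) →L[ℝ] ℝ) ηbar :=
      hK.congr_of_eventuallyEq hKev.symm
    have hDKeq := hKt.unique hKt0
    have relK : ∀ w : Fin m → ℝ,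
        W0 * (-(Z0 ^ 2)⁻¹ * Z' w) + Z0⁻¹ * W' w - Z0⁻¹ * Z' w = 0 := by
      intro w
      have h1 := ContinuousLinearMap.ext_iff.mp hDKeq w
      simpa only [ContinuousLinearMap.add_apply, ContinuousLinearMap.sub_apply,
        ContinuousLinearMap.smul_apply, ContinuousLinearMap.zero_apply, smul_eq_mul] using h1
    -- scalar part
    have hconst : Continuous fun t : ℝ => (Fin.cons t ηbar : Fin (m + 1) → ℝ) := by
      apply continuous_pi
      intro i
      refine Fin.cases ?_ ?_ i
      · simpa using continuous_id'
      · intro j; simpa using (continuous_const : Continuous fun _ : ℝ => ηbar j)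
    have hpre : {t : ℝ | (Fin.cons t ηbar : Fin (m + 1) → ℝ)
        ∈ Metric.ball (Fin.cons η0 ηbar : Fin (m + 1) → ℝ) ε} ∈ nhds η0 :=
      (hconst.continuousAt (x := η0)).preimage_mem_nhds (Metric.ball_mem_nhds _ εpos)
    have hevt : (fun t : ℝ =>
        (∫ x, Real.exp ((Fin.cons t ηbar : Fin (m + 1) → ℝ)
              ⬝ᵥ (Fin.cons 1 (sbar x) : Fin (m + 1) → ℝ))
            * ((Fin.cons t ηbar : Fin (m + 1) → ℝ)
              ⬝ᵥ (Fin.cons 1 (sbar x) : Fin (m + 1) → ℝ) - f x) ∂μ)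
          + (∫ x, Real.exp (f x) ∂μ)
          - ∫ x, Real.exp ((Fin.cons t ηbar : Fin (m + 1) → ℝ)
              ⬝ᵥ (Fin.cons 1 (sbar x) : Fin (m + 1) → ℝ)) ∂μ)
        =ᶠ[nhds η0]
        (fun t : ℝ => Real.exp t * (t * Z0 + W0 - Z0) + ∫ x, Real.exp (f x) ∂μ) := by
      refine Filter.eventuallyEq_of_mem hpre fun t htm => ?_
      have h := hukl_eq (Fin.cons t ηbar) htm
      simpa [Fin.cons_zero, Fin.tail_cons, ← hZ0def, ← hW0def] using h
    have hφ : HasDerivAt (fun t : ℝ => Real.exp t * (t * Z0 + W0 - Z0)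
        + ∫ x, Real.exp (f x) ∂μ)
        (Real.exp η0 * (η0 * Z0 + W0 - Z0) + Real.exp η0 * (1 * Z0)) η0 := by
      have hd : HasDerivAt (fun t : ℝ => t * Z0 + W0 - Z0) (1 * Z0) η0 :=
        (((hasDerivAt_id η0).mul_const Z0).add_const W0).sub_const Z0
      exact ((Real.hasDerivAt_exp η0).mul hd).add_const _
    have hφ0 : HasDerivAt (fun t : ℝ => Real.exp t * (t * Z0 + W0 - Z0)
        + ∫ x, Real.exp (f x) ∂μ) 0 η0 := ht.congr_of_eventuallyEq hevt.symm
    have hsc := hφ.unique hφ0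
    have rel0 : η0 * Z0 + W0 = 0 := by
      have h2 : Real.exp η0 * (η0 * Z0 + W0) = 0 := by linear_combination hsc
      rcases mul_eq_zero.mp h2 with h | h
      · exact absurd h (Real.exp_ne_zero η0)
      · exact h
    have e2 : W0 = -(η0 * Z0) := by linarith
    have relv : ∀ w : Fin m → ℝ, η0 * Z' w + W' w - Z' w = 0 := by
      intro w
      have h1 := relK w
      have h4 : Z0 * (η0 * Z' w + W' w - Z' w) = 0 := by
        have heq : Z0 * (η0 * Z' w + W' w - Z' w)
            = Z0 ^ 2 * (W0 * (-(Z0 ^ 2)⁻¹ * Z' w) + Z0⁻¹ * W' w - Z0⁻¹ * Z' w) := by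
          rw [e2]
          field_simp
        rw [heq, h1, mul_zero]
      rcases mul_eq_zero.mp h4 with h | h
      · exact absurd h hZ0pos.ne'
      · exact h
    have hD0 : Real.exp η0 • (η0 • ZT + Z0 • P0 + WT - ZT)
        + (η0 * Z0 + W0 - Z0) • (Real.exp η0 • P0)
        = (0 : (Fin (m + 1) → ℝ) →L[ℝ] ℝ) := by
      ext u
      rw [hDapply u]
      simp only [ContinuousLinearMap.zero_apply]
      have h5 := relv (Fin.tail u)
      rw [e2]
      linear_combination Real.exp η0 * h5
    rw [hD0] at hG
    exact hG.congr_of_eventuallyEq hev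

end
end

section
/- Let μ, σ ∈ ℝ^d with σ_j > 0 for all j, let Z be distributed according to the standard Gaussian measure γ_d on ℝ^d, and set X = μ + σ ⊙ Z. Let f : ℝ^d → ℝ be measurable with E[f(X)²] < ∞. Define γ⁰ = E[f(X)], γ¹_j = E[Z_j f(X)], γ²_j = E[(Z_j² − 1) f(X)] / √2, and then β²_j = γ²_j / (√2 σ_j²), β¹_j = γ¹_j / σ_j − 2 β²_j μ_j, β⁰ = γ⁰ − β¹ ⬝ μ − Σ_j β²_j (μ_j² + σ_j²). Then β = (β⁰, β¹, β²) ∈ ℝ^{2d+1} is the unique minimiser over β' = (β'⁰, β'¹, β'²) ∈ ℝ^{2d+1} of the least-squares objective E[(β'⁰ + β'¹ ⬝ X + Σ_j β'²_j X_j² − f(X))²]. -/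
open MeasureTheory Matrix

noncomputable section

/-- The standard Gaussian measure on `ℝ^d` (product of `d` copies of `N(0,1)`). -/
def stdGaussian (d : ℕ) : Measure (Fin d → ℝ) :=
  Measure.pi fun _ => ProbabilityTheory.gaussianReal 0 1

open ProbabilityTheory Real Filter
open scoped ENNReal NNReal

local notation "γ₁" => gaussianReal 0 1

lemma gpdf_eq (x : ℝ) : gaussianPDFReal 0 1 x = (√(2 * π))⁻¹ * rexp (-(1/2) * x ^ 2) := by
  unfold gaussianPDFReal
  rw [show (2:ℝ) * π * (1:NNReal) = 2 * π by norm_num]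
  congr 1
  push_cast
  ring_nf

lemma integral_g (φ : ℝ → ℝ) :
    ∫ x, φ x ∂γ₁ = ∫ x, φ x * ((√(2 * π))⁻¹ * rexp (-(1/2) * x ^ 2)) := by
  rw [gaussianReal_of_var_ne_zero 0 one_ne_zero]
  have hm : Measurable fun x => (gaussianPDFReal 0 1 x).toNNReal :=
    (measurable_gaussianPDFReal 0 1).real_toNNReal
  have : gaussianPDF 0 1 = fun x => ((fun x => (gaussianPDFReal 0 1 x).toNNReal) x : ℝ≥0∞) := rfl
  rw [this, integral_withDensity_eq_integral_smul hm]
  congr 1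
  ext x
  rw [NNReal.smul_def, smul_eq_mul, Real.coe_toNNReal _ (gaussianPDFReal_nonneg 0 1 x),
    mul_comm, gpdf_eq]

lemma integrable_g_iff (φ : ℝ → ℝ) (hφ : AEStronglyMeasurable φ γ₁) :
    Integrable φ γ₁ ↔ Integrable (fun x => φ x * ((√(2 * π))⁻¹ * rexp (-(1/2) * x ^ 2))) := by
  rw [gaussianReal_of_var_ne_zero 0 one_ne_zero, gaussianPDF_def,
    integrable_withDensity_iff (measurable_gaussianPDFReal 0 1).ennreal_ofReal
      (Eventually.of_forall fun x => ENNReal.ofReal_lt_top)]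
  refine integrable_congr (Eventually.of_forall fun x => ?_)
  simp only []
  rw [ENNReal.toReal_ofReal (gaussianPDFReal_nonneg 0 1 x), gpdf_eq]

lemma integrable_pow_g (n : ℕ) : Integrable (fun x => x ^ n) γ₁ := by
  rw [integrable_g_iff _ (by fun_prop)]
  have h : Integrable (fun x : ℝ => x ^ n * rexp (-(1/2) * x ^ 2)) := by
    simpa [Real.rpow_natCast] using
      integrable_rpow_mul_exp_neg_mul_sq (b := (1:ℝ)/2) (by norm_num) (s := (n : ℝ))
        (lt_of_lt_of_le neg_one_lt_zero (Nat.cast_nonneg n))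
  exact (h.const_mul ((√(2 * π))⁻¹)).congr (Eventually.of_forall fun x => by ring)


lemma int_exp_g : ∫ x : ℝ, rexp (-(1/2) * x ^ 2) = √(2 * π) := by
  have h := integral_gaussian (1/2 : ℝ)
  rw [show π / (1/2 : ℝ) = 2 * π by ring] at h
  rw [← h]

lemma integrable_pow_exp (n : ℕ) :
    Integrable (fun x : ℝ => x ^ n * rexp (-(1/2) * x ^ 2)) := by
  simpa [Real.rpow_natCast] using
    integrable_rpow_mul_exp_neg_mul_sq (b := (1:ℝ)/2) (by norm_num) (s := (n : ℝ))
      (lt_of_lt_of_le neg_one_lt_zero (Nat.cast_nonneg n))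

lemma ibp_g (n : ℕ) :
    ∫ x : ℝ, ((n + 1 : ℝ) * x ^ n - x ^ (n + 2)) * rexp (-(1/2) * x ^ 2) = 0 := by
  set f' : ℝ → ℝ := fun x => ((n + 1 : ℝ) * x ^ n - x ^ (n + 2)) * rexp (-(1/2) * x ^ 2) with hf'
  set F : ℝ → ℝ := fun x => x ^ (n + 1) * rexp (-(1/2) * x ^ 2) with hF
  have hderiv : ∀ x : ℝ, HasDerivAt F (f' x) x := by
    intro x
    have h1 : HasDerivAt (fun x : ℝ => x ^ (n + 1)) ((n + 1 : ℝ) * x ^ n) x := by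
      simpa using hasDerivAt_pow (n + 1) x
    have h2 : HasDerivAt (fun x : ℝ => rexp (-(1/2) * x ^ 2))
        (rexp (-(1/2) * x ^ 2) * (-(1/2) * (2 * x))) x := by
      have := ((hasDerivAt_pow 2 x).const_mul (-(1/2) : ℝ)).exp
      simpa using this
    have := h1.fun_mul h2
    refine HasDerivAt.congr_deriv this ?_
    show _ = ((n + 1 : ℝ) * x ^ n - x ^ (n + 2)) * rexp (-(1/2) * x ^ 2)
    ring
  have hint : Integrable f' := by
    have h1 := (integrable_pow_exp n).const_mul ((n:ℝ)+1)
    have h2 := integrable_pow_exp (n + 2)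
    refine ((h1.sub h2).congr (Filter.Eventually.of_forall fun x => ?_))
    simp only [Pi.sub_apply, hf']
    ring
  have htend : Filter.Tendsto F (Filter.cocompact ℝ) (nhds 0) := by
    rw [tendsto_zero_iff_norm_tendsto_zero]
    have := tendsto_rpow_abs_mul_exp_neg_mul_sq_cocompact (a := (1:ℝ)/2) (by norm_num)
      ((n : ℝ) + 1)
    refine Filter.Tendsto.congr (fun x => ?_) this
    rw [hF]
    have hx : |x| ^ ((n : ℝ) + 1) = |x ^ (n+1)| := by
      rw [show ((n : ℝ) + 1) = ((n + 1 : ℕ) : ℝ) by push_cast; ring, Real.rpow_natCast, abs_pow]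
    rw [hx]
    simp [Real.norm_eq_abs, abs_mul, Real.abs_exp]
  have hcc : Filter.cocompact ℝ = Filter.atBot ⊔ Filter.atTop := cocompact_eq_atBot_atTop
  have htop : Filter.Tendsto F Filter.atTop (nhds 0) :=
    htend.mono_left (by rw [hcc]; exact le_sup_right)
  have hbot : Filter.Tendsto F Filter.atBot (nhds 0) :=
    htend.mono_left (by rw [hcc]; exact le_sup_left)
  have hcont : Continuous F := by fun_prop
  have h1 : ∫ x in Set.Ioi (0:ℝ), f' x = 0 - F 0 :=
    MeasureTheory.integral_Ioi_of_hasDerivAt_of_tendsto (hcont.continuousWithinAt)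
      (fun x _ => hderiv x) (hint.integrableOn) htop
  have h2 : ∫ x in Set.Iic (0:ℝ), f' x = F 0 - 0 :=
    MeasureTheory.integral_Iic_of_hasDerivAt_of_tendsto (hcont.continuousWithinAt)
      (fun x _ => hderiv x) (hint.integrableOn) hbot
  rw [← intervalIntegral.integral_Iic_add_Ioi (hint.integrableOn) (hint.integrableOn), h1, h2]
  ring

lemma int_exp_sq : ∫ x : ℝ, x ^ 2 * rexp (-(1/2) * x ^ 2) = √(2 * π) := by
  have h := ibp_g 0
  have he : Integrable (fun x : ℝ => rexp (-(1/2) * x ^ 2)) := by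
    simpa using integrable_pow_exp 0
  have h2 := integrable_pow_exp 2
  have hsub : ∫ x : ℝ, (rexp (-(1/2) * x ^ 2) - x ^ 2 * rexp (-(1/2) * x ^ 2))
      = (∫ x : ℝ, rexp (-(1/2) * x ^ 2)) - ∫ x : ℝ, x ^ 2 * rexp (-(1/2) * x ^ 2) :=
    integral_sub he h2
  have heq : ∫ x : ℝ, (rexp (-(1/2) * x ^ 2) - x ^ 2 * rexp (-(1/2) * x ^ 2)) = 0 := by
    rw [← h]; congr 1; funext x; push_cast; ring
  rw [heq] at hsub
  rw [int_exp_g] at hsub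
  linarith

lemma int_exp_four : ∫ x : ℝ, x ^ 4 * rexp (-(1/2) * x ^ 2) = 3 * √(2 * π) := by
  have h := ibp_g 2
  have h2 := (integrable_pow_exp 2).const_mul (3 : ℝ)
  have h4 := integrable_pow_exp 4
  have hsub : ∫ x : ℝ, (3 * (x ^ 2 * rexp (-(1/2) * x ^ 2)) - x ^ 4 * rexp (-(1/2) * x ^ 2))
      = (∫ x : ℝ, 3 * (x ^ 2 * rexp (-(1/2) * x ^ 2))) - ∫ x : ℝ, x ^ 4 * rexp (-(1/2) * x ^ 2) :=
    integral_sub h2 h4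
  have heq : ∫ x : ℝ, (3 * (x ^ 2 * rexp (-(1/2) * x ^ 2)) - x ^ 4 * rexp (-(1/2) * x ^ 2)) = 0 := by
    rw [← h]; congr 1; funext x; push_cast; ring
  rw [heq, integral_const_mul, int_exp_sq] at hsub
  linarith

lemma sqrt_two_pi_pos : (0:ℝ) < √(2 * π) := Real.sqrt_pos.mpr (by positivity)

lemma gmoment2 : ∫ x, x ^ 2 ∂γ₁ = 1 := by
  rw [integral_g]
  have : ∫ x : ℝ, x ^ 2 * ((√(2 * π))⁻¹ * rexp (-(1/2) * x ^ 2))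
      = (√(2 * π))⁻¹ * ∫ x : ℝ, x ^ 2 * rexp (-(1/2) * x ^ 2) := by
    rw [← integral_const_mul]; congr 1; funext x; ring
  rw [this, int_exp_sq, inv_mul_cancel₀ (ne_of_gt sqrt_two_pi_pos)]

lemma gmoment4 : ∫ x, x ^ 4 ∂γ₁ = 3 := by
  rw [integral_g]
  have : ∫ x : ℝ, x ^ 4 * ((√(2 * π))⁻¹ * rexp (-(1/2) * x ^ 2))
      = (√(2 * π))⁻¹ * ∫ x : ℝ, x ^ 4 * rexp (-(1/2) * x ^ 2) := by
    rw [← integral_const_mul]; congr 1; funext x; ring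
  rw [this, int_exp_four]
  field_simp

lemma gmoment_odd (n : ℕ) (hn : Odd n) : ∫ x, x ^ n ∂γ₁ = 0 := by
  have hmap : (γ₁).map (fun x => -1 * x) = γ₁ := by
    have h := gaussianReal_map_const_mul (μ := 0) (v := 1) (-1)
    have h2 : NNReal.mk ((-1:ℝ)^2) (sq_nonneg _) * 1 = (1 : NNReal) := by
      ext; norm_num
    rw [h2] at h
    simpa using h
  have h1 : ∫ x, x ^ n ∂γ₁ = ∫ x, (-1 * x) ^ n ∂γ₁ := by
    conv_lhs => rw [← hmap]
    rw [integral_map (by fun_prop) (by fun_prop)]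
  have h2 : ∫ x, (-1 * x) ^ n ∂γ₁ = -∫ x, x ^ n ∂γ₁ := by
    rw [← integral_neg]; congr 1; funext x
    rw [mul_pow, hn.neg_one_pow]; ring
  rw [h2] at h1
  linarith

instance (d : ℕ) : IsProbabilityMeasure (stdGaussian d) := by
  unfold _root_.stdGaussian; infer_instance

variable {d : ℕ}

lemma integral_std_prod (φ : Fin d → ℝ → ℝ) :
    ∫ z, ∏ i, φ i (z i) ∂stdGaussian d = ∏ i, ∫ x, φ i x ∂γ₁ := by
  letI : MeasureSpace ℝ := ⟨γ₁⟩
  haveI : SigmaFinite (volume : Measure ℝ) := inferInstanceAs (SigmaFinite γ₁)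
  have hv : stdGaussian d = (volume : Measure (Fin d → ℝ)) := by
    rw [MeasureTheory.volume_pi]; rfl
  rw [hv]
  exact MeasureTheory.integral_fintype_prod_eq_prod φ

lemma integrable_std_prod (φ : Fin d → ℝ → ℝ) (h : ∀ i, Integrable (φ i) γ₁) :
    Integrable (fun z => ∏ i, φ i (z i)) (stdGaussian d) := by
  letI : MeasureSpace ℝ := ⟨γ₁⟩
  haveI : SigmaFinite (volume : Measure ℝ) := inferInstanceAs (SigmaFinite γ₁)
  have hv : stdGaussian d = (volume : Measure (Fin d → ℝ)) := by
    rw [MeasureTheory.volume_pi]; rfl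
  rw [hv]
  exact MeasureTheory.Integrable.fintype_prod h

lemma integral_std_single (j : Fin d) (φ : ℝ → ℝ) :
    ∫ z, φ (z j) ∂stdGaussian d = ∫ x, φ x ∂γ₁ := by
  have h1 : ∀ z : Fin d → ℝ, φ (z j) = ∏ i, (if i = j then φ (z i) else 1) := by
    intro z
    rw [Finset.prod_ite_eq' Finset.univ j (fun i => φ (z i))]
    simp
  calc ∫ z, φ (z j) ∂stdGaussian d
      = ∫ z, ∏ i, (fun i x => if i = j then φ x else 1) i (z i) ∂stdGaussian d := by
        congr 1; funext z; exact h1 z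
    _ = ∏ i, ∫ x, (if i = j then φ x else 1) ∂γ₁ := by
        exact integral_std_prod (fun i x => if i = j then φ x else 1)
    _ = ∏ i, (if i = j then ∫ x, φ x ∂γ₁ else 1) := by
        refine Finset.prod_congr rfl fun i _ => ?_
        by_cases h : i = j <;> simp [h]
    _ = ∫ x, φ x ∂γ₁ := by
        rw [Finset.prod_ite_eq' Finset.univ j (fun _ => ∫ x, φ x ∂γ₁)]; simp

lemma integrable_std_single (j : Fin d) (φ : ℝ → ℝ) (hφ : Integrable φ γ₁) :
    Integrable (fun z => φ (z j)) (stdGaussian d) := by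
  have h := integrable_std_prod (fun i x => if i = j then φ x else 1)
    (fun i => by by_cases h : i = j <;> simp [h, hφ, integrable_const])
  refine h.congr (Filter.Eventually.of_forall fun z => ?_)
  show (∏ i, if i = j then φ (z i) else 1) = φ (z j)
  rw [Finset.prod_ite_eq' Finset.univ j (fun i => φ (z i))]
  simp

lemma prod_pair_ite {M : Type*} [CommMonoid M] (j k : Fin d) (h : j ≠ k) (a b : Fin d → M) :
    ∏ i, (if i = j then a i else if i = k then b i else 1) = a j * b k := by
  rw [← Finset.mul_prod_erase Finset.univ _ (Finset.mem_univ j), if_pos rfl]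
  congr 1
  have hk : k ∈ Finset.univ.erase j := Finset.mem_erase.2 ⟨fun hkj => h hkj.symm, Finset.mem_univ k⟩
  rw [← Finset.mul_prod_erase _ _ hk, if_neg (fun hkj => h hkj.symm), if_pos rfl]
  have : ∏ i ∈ (Finset.univ.erase j).erase k,
      (if i = j then a i else if i = k then b i else 1) = 1 := by
    refine Finset.prod_eq_one fun i hi => ?_
    have hik : i ≠ k := (Finset.mem_erase.1 hi).1
    have hij : i ≠ j := (Finset.mem_erase.1 (Finset.mem_erase.1 hi).2).1
    rw [if_neg hij, if_neg hik]
  rw [this, mul_one]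

lemma integral_std_pair (j k : Fin d) (hjk : j ≠ k) (φ ψ : ℝ → ℝ) :
    ∫ z, φ (z j) * ψ (z k) ∂stdGaussian d = (∫ x, φ x ∂γ₁) * ∫ x, ψ x ∂γ₁ := by
  calc ∫ z, φ (z j) * ψ (z k) ∂stdGaussian d
      = ∫ z, ∏ i, (fun i x => if i = j then φ x else if i = k then ψ x else 1) i (z i)
          ∂stdGaussian d := by
        congr 1; funext z
        rw [prod_pair_ite j k hjk (fun i => φ (z i)) (fun i => ψ (z i))]
    _ = ∏ i, ∫ x, (if i = j then φ x else if i = k then ψ x else 1) ∂γ₁ := by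
        exact integral_std_prod (fun i x => if i = j then φ x else if i = k then ψ x else 1)
    _ = ∏ i, (if i = j then ∫ x, φ x ∂γ₁ else if i = k then ∫ x, ψ x ∂γ₁ else 1) := by
        refine Finset.prod_congr rfl fun i _ => ?_
        by_cases h1 : i = j
        · simp [h1]
        · by_cases h2 : i = k <;> simp [h1, h2, Ne.symm hjk]
    _ = (∫ x, φ x ∂γ₁) * ∫ x, ψ x ∂γ₁ :=
        prod_pair_ite j k hjk (fun _ => ∫ x, φ x ∂γ₁) (fun _ => ∫ x, ψ x ∂γ₁)

-- d-dimensional moments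
lemma gmoment1 : ∫ x : ℝ, x ∂γ₁ = 0 := by
  simpa using gmoment_odd 1 ⟨0, by ring⟩

lemma std_m1 (k : Fin d) : ∫ z, z k ∂stdGaussian d = 0 := by
  rw [integral_std_single k (fun x => x), gmoment1]

lemma std_mh (k : Fin d) : ∫ z, ((z k) ^ 2 - 1) ∂stdGaussian d = 0 := by
  rw [integral_std_single k (fun x => x ^ 2 - 1),
    integral_sub (integrable_pow_g 2) (integrable_const 1), gmoment2]
  simp

lemma gmoment_xh : ∫ x, x * (x ^ 2 - 1) ∂γ₁ = 0 := by
  have h : ∀ x : ℝ, x * (x ^ 2 - 1) = x ^ 3 - x ^ 1 := fun x => by ring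
  rw [show (fun x : ℝ => x * (x ^ 2 - 1)) = fun x => x ^ 3 - x ^ 1 from funext h]
  rw [integral_sub (integrable_pow_g 3) (integrable_pow_g 1),
    gmoment_odd 3 ⟨1, by ring⟩, gmoment_odd 1 ⟨0, by ring⟩]
  ring

lemma gmoment_hh : ∫ x, (x ^ 2 - 1) * (x ^ 2 - 1) ∂γ₁ = 2 := by
  have h : ∀ x : ℝ, (x ^ 2 - 1) * (x ^ 2 - 1) = x ^ 4 - 2 * x ^ 2 + 1 := fun x => by ring
  rw [show (fun x : ℝ => (x ^ 2 - 1) * (x ^ 2 - 1)) = fun x => x ^ 4 - 2 * x ^ 2 + 1 from funext h]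
  rw [integral_add (((integrable_pow_g 4).sub ((integrable_pow_g 2).const_mul 2)).congr
      (Filter.Eventually.of_forall fun x => by simp only [Pi.sub_apply]))
      (integrable_const 1),
    integral_sub (integrable_pow_g 4) ((integrable_pow_g 2).const_mul 2),
    gmoment4, integral_const_mul, gmoment2]
  norm_num

lemma std_m2 (j k : Fin d) : ∫ z, z j * z k ∂stdGaussian d = if j = k then 1 else 0 := by
  by_cases h : j = k
  · subst h
    have := integral_std_single j (fun x => x * x)
    rw [if_pos rfl, this]
    have : ∫ x, x * x ∂γ₁ = ∫ x, x ^ 2 ∂γ₁ := by congr 1; funext x; ring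
    rw [this, gmoment2]
  · rw [if_neg h, integral_std_pair j k h (fun x => x) (fun x => x)]
    rw [gmoment1]; ring

lemma std_m3 (j k : Fin d) : ∫ z, z j * ((z k) ^ 2 - 1) ∂stdGaussian d = 0 := by
  by_cases h : j = k
  · subst h
    rw [integral_std_single j (fun x => x * (x ^ 2 - 1)), gmoment_xh]
  · rw [integral_std_pair j k h (fun x => x) (fun x => x ^ 2 - 1)]
    rw [gmoment1]; ring

lemma std_m4 (j k : Fin d) :
    ∫ z, ((z j) ^ 2 - 1) * ((z k) ^ 2 - 1) ∂stdGaussian d = if j = k then 2 else 0 := by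
  by_cases h : j = k
  · subst h
    rw [if_pos rfl, integral_std_single j (fun x => (x ^ 2 - 1) * (x ^ 2 - 1)), gmoment_hh]
  · rw [if_neg h, integral_std_pair j k h (fun x => x ^ 2 - 1) (fun x => x ^ 2 - 1)]
    have h1 : ∫ x : ℝ, (x ^ 2 - 1) ∂γ₁ = 0 := by
      rw [integral_sub (integrable_pow_g 2) (integrable_const 1), gmoment2]; simp
    rw [h1]; ring

-- MemLp infrastructure
lemma memL2_mul_integrable {α : Type*} {m : MeasurableSpace α} {μ : Measure α} {f g : α → ℝ}
    (hf : MemLp f 2 μ) (hg : MemLp g 2 μ) : Integrable (fun x => f x * g x) μ := by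
  have hpqr : (1 : ENNReal)/1 = 1/2 + 1/2 := by
    simp only [one_div, inv_one]
    rw [ENNReal.inv_two_add_inv_two]
  have h := hg.smul (φ := f) hf (p := 2) (q := 2) (r := 1)
    (hpqr := ⟨by rw [ENNReal.inv_two_add_inv_two, inv_one]⟩)
  rw [memLp_one_iff_integrable] at h
  exact h.congr (Filter.Eventually.of_forall fun x => by simp [smul_eq_mul])

lemma memL2_coord (j : Fin d) : MemLp (fun z : Fin d → ℝ => z j) 2 (stdGaussian d) := by
  refine (memLp_two_iff_integrable_sq (measurable_pi_apply j).aestronglyMeasurable).2 ?_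
  exact (integrable_std_single j (fun x => x ^ 2) (integrable_pow_g 2)).congr
    (Filter.Eventually.of_forall fun z => rfl)

lemma memL2_h (j : Fin d) :
    MemLp (fun z : Fin d → ℝ => (z j) ^ 2 - 1) 2 (stdGaussian d) := by
  refine (memLp_two_iff_integrable_sq (((measurable_pi_apply j).pow_const 2).sub
    measurable_const).aestronglyMeasurable).2 ?_
  have hint : Integrable (fun x : ℝ => (x ^ 2 - 1) ^ 2) γ₁ := by
    refine (((integrable_pow_g 4).sub ((integrable_pow_g 2).const_mul 2)).add
      (integrable_const 1)).congr (Filter.Eventually.of_forall fun x => by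
        simp only [Pi.add_apply, Pi.sub_apply]; ring)
  exact (integrable_std_single j (fun x => (x ^ 2 - 1) ^ 2) hint).congr
    (Filter.Eventually.of_forall fun z => rfl)

def combo {d : ℕ} (a0 : ℝ) (a1 a2 : Fin d → ℝ) (z : Fin d → ℝ) : ℝ :=
  a0 + (∑ j, a1 j * z j) + ∑ j, a2 j * ((z j) ^ 2 - 1)

lemma integrable_coord (j : Fin d) : Integrable (fun z : Fin d → ℝ => z j) (stdGaussian d) :=
  (memL2_coord j).integrable one_le_two

lemma integrable_hfun (j : Fin d) :
    Integrable (fun z : Fin d → ℝ => (z j) ^ 2 - 1) (stdGaussian d) :=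
  (memL2_h j).integrable one_le_two

lemma memL2_combo (a0 : ℝ) (a1 a2 : Fin d → ℝ) :
    MemLp (combo a0 a1 a2) 2 (stdGaussian d) := by
  have h1 : MemLp (fun z : Fin d → ℝ => ∑ j, a1 j * z j) 2 (stdGaussian d) := by
    have h := memLp_finset_sum' (μ := stdGaussian d) Finset.univ
      (fun (j : Fin d) _ => (memL2_coord j).const_mul (a1 j))
    rwa [show (∑ j : Fin d, fun z : Fin d → ℝ => a1 j * z j)
      = fun z : Fin d → ℝ => ∑ j, a1 j * z j by funext z; simp] at h
  have h2 : MemLp (fun z : Fin d → ℝ => ∑ j, a2 j * ((z j) ^ 2 - 1)) 2 (stdGaussian d) := by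
    have h := memLp_finset_sum' (μ := stdGaussian d) Finset.univ
      (fun (j : Fin d) _ => (memL2_h j).const_mul (a2 j))
    rwa [show (∑ j : Fin d, fun z : Fin d → ℝ => a2 j * ((z j) ^ 2 - 1))
      = fun z : Fin d → ℝ => ∑ j, a2 j * ((z j) ^ 2 - 1) by funext z; simp] at h
  exact ((memLp_const a0).add h1).add h2

lemma int_combo_mul (F : (Fin d → ℝ) → ℝ) (hF : MemLp F 2 (stdGaussian d))
    (a0 : ℝ) (a1 a2 : Fin d → ℝ) :
    ∫ z, combo a0 a1 a2 z * F z ∂stdGaussian d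
      = a0 * (∫ z, F z ∂stdGaussian d)
        + (∑ j, a1 j * ∫ z, z j * F z ∂stdGaussian d)
        + ∑ j, a2 j * ∫ z, ((z j) ^ 2 - 1) * F z ∂stdGaussian d := by
  have hpt : (fun z => combo a0 a1 a2 z * F z)
      = fun z => a0 * F z + (∑ j, a1 j * (z j * F z))
        + ∑ j, a2 j * (((z j) ^ 2 - 1) * F z) := by
    funext z
    simp only [combo]
    rw [add_mul, add_mul, Finset.sum_mul, Finset.sum_mul]
    refine congrArg₂ (· + ·) (congrArg₂ (· + ·) rfl ?_) ?_ <;>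
      exact Finset.sum_congr rfl fun j _ => by ring
  have hiF : Integrable F (stdGaussian d) := hF.integrable one_le_two
  have hi1 : ∀ j : Fin d, Integrable (fun z => z j * F z) (stdGaussian d) :=
    fun j => memL2_mul_integrable (memL2_coord j) hF
  have hi2 : ∀ j : Fin d, Integrable (fun z => ((z j) ^ 2 - 1) * F z) (stdGaussian d) :=
    fun j => memL2_mul_integrable (memL2_h j) hF
  have hs1 : Integrable (fun z => ∑ j, a1 j * (z j * F z)) (stdGaussian d) :=
    integrable_finset_sum _ fun j _ => (hi1 j).const_mul _
  have hs2 : Integrable (fun z => ∑ j, a2 j * (((z j) ^ 2 - 1) * F z)) (stdGaussian d) :=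
    integrable_finset_sum _ fun j _ => (hi2 j).const_mul _
  have hadd1 : Integrable (fun z => a0 * F z + ∑ j, a1 j * (z j * F z)) (stdGaussian d) :=
    (hiF.const_mul a0).add hs1
  rw [hpt, integral_add hadd1 hs2,
    integral_add (hiF.const_mul a0) hs1, integral_const_mul,
    integral_finset_sum _ (fun j _ => (hi1 j).const_mul _),
    integral_finset_sum _ (fun j _ => (hi2 j).const_mul _)]
  simp_rw [integral_const_mul]

lemma int_combo (a0 : ℝ) (a1 a2 : Fin d → ℝ) :
    ∫ z, combo a0 a1 a2 z ∂stdGaussian d = a0 := by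
  have h := int_combo_mul (fun _ => 1) (memLp_const 1) a0 a1 a2
  simp only [mul_one] at h
  rw [show (fun z : Fin d → ℝ => combo a0 a1 a2 z) = fun z => combo a0 a1 a2 z * 1 by
    funext z; ring] at *
  rw [h]
  simp only [integral_const, measure_univ, ENNReal.toReal_one, smul_eq_mul, one_mul, mul_one]
  simp_rw [std_m1, std_mh]
  simp

lemma std_m3' (j k : Fin d) : ∫ z, ((z j) ^ 2 - 1) * z k ∂stdGaussian d = 0 := by
  rw [show (fun z : Fin d → ℝ => ((z j) ^ 2 - 1) * z k) = fun z => z k * ((z j) ^ 2 - 1) by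
    funext z; ring]
  exact std_m3 k j

lemma int_coord_combo (k : Fin d) (a0 : ℝ) (a1 a2 : Fin d → ℝ) :
    ∫ z, z k * combo a0 a1 a2 z ∂stdGaussian d = a1 k := by
  have h := int_combo_mul (fun z => z k) (memL2_coord k) a0 a1 a2
  rw [show (fun z : Fin d → ℝ => combo a0 a1 a2 z * z k)
      = fun z => z k * combo a0 a1 a2 z by funext z; ring] at h
  rw [h, std_m1]
  have h1 : ∀ j : Fin d, ∫ z, z j * z k ∂stdGaussian d = if j = k then 1 else 0 := fun j => std_m2 j k
  have h2 : ∀ j : Fin d, ∫ z, ((z j) ^ 2 - 1) * z k ∂stdGaussian d = 0 := fun j => std_m3' j k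
  simp_rw [h1, h2]
  simp [Finset.sum_ite_eq']

lemma int_h_combo (k : Fin d) (a0 : ℝ) (a1 a2 : Fin d → ℝ) :
    ∫ z, ((z k) ^ 2 - 1) * combo a0 a1 a2 z ∂stdGaussian d = 2 * a2 k := by
  have h := int_combo_mul (fun z => (z k) ^ 2 - 1) (memL2_h k) a0 a1 a2
  rw [show (fun z : Fin d → ℝ => combo a0 a1 a2 z * ((z k) ^ 2 - 1))
      = fun z => ((z k) ^ 2 - 1) * combo a0 a1 a2 z by funext z; ring] at h
  rw [h, std_mh]
  have h1 : ∀ j : Fin d, ∫ z, z j * ((z k) ^ 2 - 1) ∂stdGaussian d = 0 := fun j => std_m3 j k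
  have h2 : ∀ j : Fin d, ∫ z, ((z j) ^ 2 - 1) * ((z k) ^ 2 - 1) ∂stdGaussian d
      = if j = k then 2 else 0 := fun j => std_m4 j k
  simp_rw [h1, h2]
  simp [Finset.sum_ite_eq', mul_comm]

lemma master (F : (Fin d → ℝ) → ℝ) (hF : MemLp F 2 (stdGaussian d))
    (A0 g0 : ℝ) (A1 A2 g1 g2 : Fin d → ℝ)
    (hg0 : g0 = ∫ z, F z ∂stdGaussian d)
    (hg1 : ∀ j, g1 j = ∫ z, z j * F z ∂stdGaussian d)
    (hg2 : ∀ j, 2 * g2 j = ∫ z, ((z j) ^ 2 - 1) * F z ∂stdGaussian d) :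
    ∫ z, (combo A0 A1 A2 z - F z) ^ 2 ∂stdGaussian d
      = (∫ z, (combo g0 g1 g2 z - F z) ^ 2 ∂stdGaussian d)
        + ((A0 - g0) ^ 2 + (∑ j, (A1 j - g1 j) ^ 2) + 2 * ∑ j, (A2 j - g2 j) ^ 2) := by
  set D : (Fin d → ℝ) → ℝ := combo (A0 - g0) (fun j => A1 j - g1 j) (fun j => A2 j - g2 j)
    with hDdef
  set R : (Fin d → ℝ) → ℝ := fun z => combo g0 g1 g2 z - F z with hRdef
  have hD : ∀ z, combo A0 A1 A2 z - combo g0 g1 g2 z = D z := by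
    intro z
    have e1 : ∑ j, (A1 j - g1 j) * z j = (∑ j, A1 j * z j) - ∑ j, g1 j * z j := by
      rw [← Finset.sum_sub_distrib]; exact Finset.sum_congr rfl fun j _ => by ring
    have e2 : ∑ j, (A2 j - g2 j) * ((z j) ^ 2 - 1)
        = (∑ j, A2 j * ((z j) ^ 2 - 1)) - ∑ j, g2 j * ((z j) ^ 2 - 1) := by
      rw [← Finset.sum_sub_distrib]; exact Finset.sum_congr rfl fun j _ => by ring
    simp only [hDdef, combo, e1, e2]
    ring
  have hL2D : MemLp D 2 (stdGaussian d) := memL2_combo _ _ _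
  have hL2g : MemLp (combo g0 g1 g2) 2 (stdGaussian d) := memL2_combo _ _ _
  have hR : MemLp R 2 (stdGaussian d) := hL2g.sub hF
  have hsplit : ∀ z, (combo A0 A1 A2 z - F z) ^ 2 = D z ^ 2 + 2 * (D z * R z) + R z ^ 2 := by
    intro z
    have h1 : combo A0 A1 A2 z - F z = D z + R z := by rw [← hD z, hRdef]; ring
    rw [h1]; ring
  have hDD : Integrable (fun z => D z ^ 2) (stdGaussian d) := hL2D.integrable_sq
  have hDR : Integrable (fun z => D z * R z) (stdGaussian d) := memL2_mul_integrable hL2D hR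
  have hRR : Integrable (fun z => R z ^ 2) (stdGaussian d) := hR.integrable_sq
  have hIDD : ∫ z, D z ^ 2 ∂stdGaussian d
      = (A0 - g0) ^ 2 + (∑ j, (A1 j - g1 j) ^ 2) + 2 * ∑ j, (A2 j - g2 j) ^ 2 := by
    have hpt : (fun z => D z ^ 2) = fun z => D z * D z := by funext z; ring
    rw [hpt]
    have h := int_combo_mul D hL2D (A0 - g0) (fun j => A1 j - g1 j) (fun j => A2 j - g2 j)
    rw [← hDdef] at h
    rw [h, int_combo]
    have e1 : ∀ j : Fin d, ∫ z, z j * D z ∂stdGaussian d = A1 j - g1 j := fun j => by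
      rw [hDdef]; exact int_coord_combo j _ _ _
    have e2 : ∀ j : Fin d, ∫ z, ((z j) ^ 2 - 1) * D z ∂stdGaussian d = 2 * (A2 j - g2 j) :=
      fun j => by rw [hDdef]; exact int_h_combo j _ _ _
    simp_rw [e1, e2]
    rw [Finset.mul_sum]
    congr 1
    · congr 1
      · ring
      · exact Finset.sum_congr rfl fun j _ => by ring
    · exact Finset.sum_congr rfl fun j _ => by ring
  have hIDR : ∫ z, D z * R z ∂stdGaussian d = 0 := by
    have hpt : (fun z => D z * R z) = fun z => D z * combo g0 g1 g2 z - D z * F z := by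
      funext z; rw [hRdef]; ring
    have hint1 : Integrable (fun z => D z * combo g0 g1 g2 z) (stdGaussian d) :=
      memL2_mul_integrable hL2D hL2g
    have hint2 : Integrable (fun z => D z * F z) (stdGaussian d) :=
      memL2_mul_integrable hL2D hF
    rw [hpt, integral_sub hint1 hint2]
    have h1 := int_combo_mul (combo g0 g1 g2) hL2g (A0 - g0) (fun j => A1 j - g1 j)
      (fun j => A2 j - g2 j)
    have h2 := int_combo_mul F hF (A0 - g0) (fun j => A1 j - g1 j) (fun j => A2 j - g2 j)
    rw [← hDdef] at h1 h2
    rw [h1, h2, int_combo]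
    have e1 : ∀ j : Fin d, ∫ z, z j * combo g0 g1 g2 z ∂stdGaussian d = g1 j :=
      fun j => int_coord_combo j _ _ _
    have e2 : ∀ j : Fin d, ∫ z, ((z j) ^ 2 - 1) * combo g0 g1 g2 z ∂stdGaussian d = 2 * g2 j :=
      fun j => int_h_combo j _ _ _
    simp_rw [e1, e2, ← hg0, ← hg1, ← hg2]
    ring
  calc ∫ z, (combo A0 A1 A2 z - F z) ^ 2 ∂stdGaussian d
      = ∫ z, (D z ^ 2 + 2 * (D z * R z) + R z ^ 2) ∂stdGaussian d := by
        congr 1; funext z; exact hsplit z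
    _ = (∫ z, D z ^ 2 ∂stdGaussian d) + 2 * (∫ z, D z * R z ∂stdGaussian d)
        + ∫ z, R z ^ 2 ∂stdGaussian d := by
        have hadd : Integrable (fun z => D z ^ 2 + 2 * (D z * R z)) (stdGaussian d) :=
          hDD.add (hDR.const_mul 2)
        rw [integral_add hadd hRR, integral_add hDD (hDR.const_mul 2), integral_const_mul]
    _ = _ := by
        rw [hIDD, hIDR, hRdef]
        ring


set_option maxHeartbeats 1000000 in
/-- Mean-field least squares: with `X = μ + σ ⊙ Z`, `Z ∼ N(0, I_d)`,
`σ_j > 0` and `E[f(X)²] < ∞`, set `γ⁰ = E[f(X)]`, `γ¹_j = E[Z_j f(X)]`,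
`γ²_j = E[(Z_j² − 1) f(X)]/√2`, `β²_j = γ²_j/(√2 σ_j²)`, `β¹_j = γ¹_j/σ_j − 2 β²_j μ_j`,
`β⁰ = γ⁰ − β¹ ⬝ μ − Σ_j β²_j (μ_j² + σ_j²)`. Then `β = (β⁰, β¹, β²)` is the unique
minimiser of `β' ↦ E[(β'⁰ + β'¹ ⬝ X + Σ_j β'²_j X_j² − f(X))²]`. -/
theorem stmt10
    {d : ℕ} (μv σ : Fin d → ℝ) (hσ : ∀ j, 0 < σ j)
    (f : (Fin d → ℝ) → ℝ) (hf : Measurable f)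
    (hfL2 : Integrable (fun z => (f (μv + σ * z)) ^ 2) (stdGaussian d))
    (γ0 : ℝ) (hγ0 : γ0 = ∫ z, f (μv + σ * z) ∂stdGaussian d)
    (γ1 : Fin d → ℝ) (hγ1 : γ1 = fun j => ∫ z, z j * f (μv + σ * z) ∂stdGaussian d)
    (γ2 : Fin d → ℝ)
    (hγ2 : γ2 = fun j => (∫ z, ((z j) ^ 2 - 1) * f (μv + σ * z) ∂stdGaussian d) / Real.sqrt 2)
    (β2 : Fin d → ℝ) (hβ2 : β2 = fun j => γ2 j / (Real.sqrt 2 * (σ j) ^ 2))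
    (β1 : Fin d → ℝ) (hβ1 : β1 = fun j => γ1 j / σ j - 2 * β2 j * μv j)
    (β0 : ℝ) (hβ0 : β0 = γ0 - β1 ⬝ᵥ μv - ∑ j, β2 j * ((μv j) ^ 2 + (σ j) ^ 2)) :
    -- `β` minimises the least-squares objective ...
    (∀ (b0 : ℝ) (b1 b2 : Fin d → ℝ),
      (∫ z, (β0 + β1 ⬝ᵥ (μv + σ * z) + (∑ j, β2 j * ((μv + σ * z) j) ^ 2)
          - f (μv + σ * z)) ^ 2 ∂stdGaussian d)
        ≤ ∫ z, (b0 + b1 ⬝ᵥ (μv + σ * z) + (∑ j, b2 j * ((μv + σ * z) j) ^ 2)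
            - f (μv + σ * z)) ^ 2 ∂stdGaussian d)
    ∧
    -- ... and it is the unique such minimiser
    (∀ (b0 : ℝ) (b1 b2 : Fin d → ℝ),
      (∀ (c0 : ℝ) (c1 c2 : Fin d → ℝ),
        (∫ z, (b0 + b1 ⬝ᵥ (μv + σ * z) + (∑ j, b2 j * ((μv + σ * z) j) ^ 2)
            - f (μv + σ * z)) ^ 2 ∂stdGaussian d)
          ≤ ∫ z, (c0 + c1 ⬝ᵥ (μv + σ * z) + (∑ j, c2 j * ((μv + σ * z) j) ^ 2)
              - f (μv + σ * z)) ^ 2 ∂stdGaussian d) →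
      b0 = β0 ∧ b1 = β1 ∧ b2 = β2) := by
  have hsqrt2 : (0:ℝ) < Real.sqrt 2 := Real.sqrt_pos.mpr (by norm_num)
  have hsqrt2' : Real.sqrt 2 * Real.sqrt 2 = 2 := Real.mul_self_sqrt (by norm_num)
  have hFm : AEStronglyMeasurable (fun z => f (μv + σ * z)) (stdGaussian d) := by
    refine (hf.comp ?_).aestronglyMeasurable
    exact measurable_const.add (measurable_const.mul measurable_id)
  have hF2 : MemLp (fun z => f (μv + σ * z)) 2 (stdGaussian d) :=
    (memLp_two_iff_integrable_sq hFm).2 hfL2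
  set g2 : Fin d → ℝ := fun j => γ2 j / Real.sqrt 2 with hg2def
  have hg1 : ∀ j, γ1 j = ∫ z, z j * f (μv + σ * z) ∂stdGaussian d := fun j => by rw [hγ1]
  have hg2 : ∀ j, 2 * g2 j
      = ∫ z, ((z j) ^ 2 - 1) * f (μv + σ * z) ∂stdGaussian d := by
    intro j
    have h : g2 j = (∫ z, ((z j) ^ 2 - 1) * f (μv + σ * z) ∂stdGaussian d)
        / (Real.sqrt 2 * Real.sqrt 2) := by
      simp only [hg2def, hγ2, div_div]
    rw [h, hsqrt2']
    ring
  have hpt : ∀ (b0 : ℝ) (b1 b2 : Fin d → ℝ) (z : Fin d → ℝ),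
      b0 + b1 ⬝ᵥ (μv + σ * z) + (∑ j, b2 j * ((μv + σ * z) j) ^ 2) - f (μv + σ * z)
        = combo (b0 + ∑ j, (b1 j * μv j + b2 j * ((μv j) ^ 2 + (σ j) ^ 2)))
            (fun j => b1 j * σ j + 2 * b2 j * μv j * σ j)
            (fun j => b2 j * (σ j) ^ 2) z - f (μv + σ * z) := by
    intro b0 b1 b2 z
    simp only [dotProduct, Pi.add_apply, Pi.mul_apply, combo]
    have e : ∀ j : Fin d, b1 j * (μv j + σ j * z j) + b2 j * (μv j + σ j * z j) ^ 2
        = (b1 j * μv j + b2 j * ((μv j) ^ 2 + (σ j) ^ 2))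
          + ((b1 j * σ j + 2 * b2 j * μv j * σ j) * z j
            + (b2 j * (σ j) ^ 2) * ((z j) ^ 2 - 1)) := fun j => by ring
    have h1 : (∑ j, b1 j * (μv j + σ j * z j)) + ∑ j, b2 j * (μv j + σ j * z j) ^ 2
        = ∑ j, (b1 j * (μv j + σ j * z j) + b2 j * (μv j + σ j * z j) ^ 2) :=
      (Finset.sum_add_distrib).symm
    have h2 : ∑ j, (b1 j * (μv j + σ j * z j) + b2 j * (μv j + σ j * z j) ^ 2)
        = (∑ j, (b1 j * μv j + b2 j * ((μv j) ^ 2 + (σ j) ^ 2)))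
          + ∑ j, ((b1 j * σ j + 2 * b2 j * μv j * σ j) * z j
            + (b2 j * (σ j) ^ 2) * ((z j) ^ 2 - 1)) := by
      rw [Finset.sum_congr rfl fun j _ => e j, Finset.sum_add_distrib]
    have h3 : ∑ j, ((b1 j * σ j + 2 * b2 j * μv j * σ j) * z j
          + (b2 j * (σ j) ^ 2) * ((z j) ^ 2 - 1))
        = (∑ j, (b1 j * σ j + 2 * b2 j * μv j * σ j) * z j)
          + ∑ j, (b2 j * (σ j) ^ 2) * ((z j) ^ 2 - 1) := Finset.sum_add_distrib
    rw [add_assoc b0, h1, h2, h3]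
    ring
  have hT2β : ∀ j, β2 j * (σ j) ^ 2 = g2 j := by
    intro j
    simp only [hβ2, hg2def]
    field_simp [(hσ j).ne', hsqrt2.ne']
  have hT1β : ∀ j, β1 j * σ j + 2 * β2 j * μv j * σ j = γ1 j := by
    intro j
    rw [hβ1]
    field_simp [(hσ j).ne']
    ring
  have hT0β : β0 + ∑ j, (β1 j * μv j + β2 j * ((μv j) ^ 2 + (σ j) ^ 2)) = γ0 := by
    rw [hβ0]
    simp only [dotProduct, Finset.sum_add_distrib]
    ring
  have hβcoeff : ∀ z, combo (β0 + ∑ j, (β1 j * μv j + β2 j * ((μv j) ^ 2 + (σ j) ^ 2)))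
      (fun j => β1 j * σ j + 2 * β2 j * μv j * σ j) (fun j => β2 j * (σ j) ^ 2) z
      = combo γ0 γ1 g2 z := by
    intro z
    have s1 : ∑ j, (β1 j * σ j + 2 * β2 j * μv j * σ j) * z j = ∑ j, γ1 j * z j :=
      Finset.sum_congr rfl fun j _ => by rw [hT1β j]
    have s2 : ∑ j, (β2 j * (σ j) ^ 2) * ((z j) ^ 2 - 1) = ∑ j, g2 j * ((z j) ^ 2 - 1) :=
      Finset.sum_congr rfl fun j _ => by rw [hT2β j]
    simp only [combo]
    rw [hT0β, s1, s2]
  have hobjβ : (∫ z, (β0 + β1 ⬝ᵥ (μv + σ * z) + (∑ j, β2 j * ((μv + σ * z) j) ^ 2)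
        - f (μv + σ * z)) ^ 2 ∂stdGaussian d)
      = ∫ z, (combo γ0 γ1 g2 z - f (μv + σ * z)) ^ 2 ∂stdGaussian d := by
    congr 1
    funext z
    rw [hpt β0 β1 β2 z, hβcoeff z]
  have key : ∀ (b0 : ℝ) (b1 b2 : Fin d → ℝ),
      (∫ z, (b0 + b1 ⬝ᵥ (μv + σ * z) + (∑ j, b2 j * ((μv + σ * z) j) ^ 2)
          - f (μv + σ * z)) ^ 2 ∂stdGaussian d)
        = (∫ z, (combo γ0 γ1 g2 z - f (μv + σ * z)) ^ 2 ∂stdGaussian d)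
          + (((b0 + ∑ j, (b1 j * μv j + b2 j * ((μv j) ^ 2 + (σ j) ^ 2))) - γ0) ^ 2
            + (∑ j, ((b1 j * σ j + 2 * b2 j * μv j * σ j) - γ1 j) ^ 2)
            + 2 * ∑ j, ((b2 j * (σ j) ^ 2) - g2 j) ^ 2) := by
    intro b0 b1 b2
    have hrw : (∫ z, (b0 + b1 ⬝ᵥ (μv + σ * z) + (∑ j, b2 j * ((μv + σ * z) j) ^ 2)
          - f (μv + σ * z)) ^ 2 ∂stdGaussian d)
        = ∫ z, (combo (b0 + ∑ j, (b1 j * μv j + b2 j * ((μv j) ^ 2 + (σ j) ^ 2)))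
            (fun j => b1 j * σ j + 2 * b2 j * μv j * σ j)
            (fun j => b2 j * (σ j) ^ 2) z - f (μv + σ * z)) ^ 2 ∂stdGaussian d := by
      congr 1; funext z; rw [hpt b0 b1 b2 z]
    rw [hrw]
    exact master (fun z => f (μv + σ * z)) hF2 _ γ0 _ _ γ1 g2 hγ0 hg1 hg2
  have hQnonneg : ∀ (b0 : ℝ) (b1 b2 : Fin d → ℝ),
      0 ≤ ((b0 + ∑ j, (b1 j * μv j + b2 j * ((μv j) ^ 2 + (σ j) ^ 2))) - γ0) ^ 2
        + (∑ j, ((b1 j * σ j + 2 * b2 j * μv j * σ j) - γ1 j) ^ 2)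
        + 2 * ∑ j, ((b2 j * (σ j) ^ 2) - g2 j) ^ 2 := by
    intro b0 b1 b2
    have h1 : (0:ℝ) ≤ ∑ j, ((b1 j * σ j + 2 * b2 j * μv j * σ j) - γ1 j) ^ 2 :=
      Finset.sum_nonneg fun j _ => sq_nonneg _
    have h2 : (0:ℝ) ≤ ∑ j, ((b2 j * (σ j) ^ 2) - g2 j) ^ 2 :=
      Finset.sum_nonneg fun j _ => sq_nonneg _
    nlinarith [sq_nonneg ((b0 + ∑ j, (b1 j * μv j + b2 j * ((μv j) ^ 2 + (σ j) ^ 2))) - γ0)]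
  constructor
  · intro b0 b1 b2
    rw [key b0 b1 b2, hobjβ]
    linarith [hQnonneg b0 b1 b2]
  · intro b0 b1 b2 hmin
    have hle := hmin β0 β1 β2
    rw [key b0 b1 b2, key β0 β1 β2] at hle
    have hβzero : ((β0 + ∑ j, (β1 j * μv j + β2 j * ((μv j) ^ 2 + (σ j) ^ 2))) - γ0) ^ 2
        + (∑ j, ((β1 j * σ j + 2 * β2 j * μv j * σ j) - γ1 j) ^ 2)
        + 2 * ∑ j, ((β2 j * (σ j) ^ 2) - g2 j) ^ 2 = 0 := by
      rw [hT0β]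
      have e1 : ∀ j : Fin d, (β1 j * σ j + 2 * β2 j * μv j * σ j) - γ1 j = 0 :=
        fun j => by rw [hT1β j]; ring
      have e2 : ∀ j : Fin d, (β2 j * (σ j) ^ 2) - g2 j = 0 := fun j => by rw [hT2β j]; ring
      simp_rw [e1, e2]
      simp
    rw [hβzero] at hle
    have hQ0 : ((b0 + ∑ j, (b1 j * μv j + b2 j * ((μv j) ^ 2 + (σ j) ^ 2))) - γ0) ^ 2
        + (∑ j, ((b1 j * σ j + 2 * b2 j * μv j * σ j) - γ1 j) ^ 2)
        + 2 * ∑ j, ((b2 j * (σ j) ^ 2) - g2 j) ^ 2 = 0 := by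
      have := hQnonneg b0 b1 b2
      linarith
    have h1n : (0:ℝ) ≤ ∑ j, ((b1 j * σ j + 2 * b2 j * μv j * σ j) - γ1 j) ^ 2 :=
      Finset.sum_nonneg fun j _ => sq_nonneg _
    have h2n : (0:ℝ) ≤ ∑ j, ((b2 j * (σ j) ^ 2) - g2 j) ^ 2 :=
      Finset.sum_nonneg fun j _ => sq_nonneg _
    have h0n := sq_nonneg ((b0 + ∑ j, (b1 j * μv j + b2 j * ((μv j) ^ 2 + (σ j) ^ 2))) - γ0)
    have hs0 : ((b0 + ∑ j, (b1 j * μv j + b2 j * ((μv j) ^ 2 + (σ j) ^ 2))) - γ0) ^ 2 = 0 := by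
      nlinarith
    have hs1 : ∑ j, ((b1 j * σ j + 2 * b2 j * μv j * σ j) - γ1 j) ^ 2 = 0 := by nlinarith
    have hs2 : ∑ j, ((b2 j * (σ j) ^ 2) - g2 j) ^ 2 = 0 := by nlinarith
    have hb2 : b2 = β2 := by
      funext j
      have h1 := (Finset.sum_eq_zero_iff_of_nonneg (fun j _ => sq_nonneg _)).1 hs2 j
        (Finset.mem_univ j)
      have h2 : b2 j * (σ j) ^ 2 - g2 j = 0 := by
        exact pow_eq_zero_iff (two_ne_zero) |>.1 h1
      have h3 : b2 j * (σ j) ^ 2 = γ2 j / Real.sqrt 2 := by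
        have hg : g2 j = γ2 j / Real.sqrt 2 := by rw [hg2def]
        linarith
      rw [hβ2]
      rw [eq_div_iff (mul_ne_zero hsqrt2.ne' (pow_ne_zero 2 (hσ j).ne'))]
      calc b2 j * (Real.sqrt 2 * (σ j) ^ 2) = b2 j * (σ j) ^ 2 * Real.sqrt 2 := by ring
        _ = γ2 j / Real.sqrt 2 * Real.sqrt 2 := by rw [h3]
        _ = γ2 j := by field_simp
    have hb1 : b1 = β1 := by
      funext j
      have h1 := (Finset.sum_eq_zero_iff_of_nonneg (fun j _ => sq_nonneg _)).1 hs1 j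
        (Finset.mem_univ j)
      have h2 : b1 j * σ j + 2 * b2 j * μv j * σ j - γ1 j = 0 :=
        pow_eq_zero_iff (two_ne_zero) |>.1 h1
      have hval : b1 j * σ j + 2 * b2 j * μv j * σ j = γ1 j := by linarith
      rw [hb2] at hval
      have hβval := hT1β j
      have hmm : b1 j * σ j = β1 j * σ j := by linarith
      exact mul_right_cancel₀ (hσ j).ne' hmm
    have hb0 : b0 = β0 := by
      have h2 : b0 + ∑ j, (b1 j * μv j + b2 j * ((μv j) ^ 2 + (σ j) ^ 2)) - γ0 = 0 :=
        pow_eq_zero_iff (two_ne_zero) |>.1 hs0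
      have hval : b0 + ∑ j, (b1 j * μv j + b2 j * ((μv j) ^ 2 + (σ j) ^ 2)) = γ0 := by
        linarith
      rw [hb1, hb2] at hval
      linarith [hT0β, hval]
    exact ⟨hb0, hb1, hb2⟩
end
end
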